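/- arXiv:2510.20789 — 6 statements merged into one kernel-verified Lean document; each statement's English description precedes it below -/
import Mathlib

section
/- Let k, n, d be positive integers with k ≤ n, let ψ_1, …, ψ_n ∈ ℂ^d be (possibly subnormalized) vectors, and let G be their Gram matrix. Then the infimum, over all POVMs {M_S} indexed by the k-element subsets S of {1,…,n} (i.e., families of d×d positive semidefinite matrices with ∑_{|S|=k} M_S = I), of the quantity (1/n)·∑_{i=1}^n ⟨ψ_i, (∑_{S : i∉S} M_S) ψ_i⟩, equals the infimum, over all families {W_S} of n×n positive semidefinite matrices indexed by the k-element subsets S of {1,…,n} with ∑_{|S|=k} W_S = (1/n)·G, of the quantity ∑_{i=1}^n (∑_{S : i∉S} W_S)_{ii}; moreover both infima are attained. -/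
open Matrix BigOperators Finset ComplexOrder

noncomputable section

/-- The number of nonzero entries of a vector in `ℂ^n`. -/
def suppCard {n : ℕ} (v : Fin n → ℂ) : ℕ :=
  (Finset.univ.filter fun i => v i ≠ 0).card

/-- A matrix `X` is `k`-incoherent if it can be written as `∑ vᵢ vᵢ*` where each `vᵢ`
has at most `k` nonzero entries. -/
def KIncoherent {n : ℕ} (k : ℕ) (X : Matrix (Fin n) (Fin n) ℂ) : Prop :=
  ∃ (m : ℕ) (v : Fin m → (Fin n → ℂ)),
    (∀ i, suppCard (v i) ≤ k) ∧ X = ∑ i, vecMulVec (v i) (star (v i))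

/-- The set `I_k` of positive semidefinite, `k`-incoherent matrices with trace at most `1`. -/
def Ik (n k : ℕ) : Set (Matrix (Fin n) (Fin n) ℂ) :=
  {X | X.PosSemidef ∧ KIncoherent k X ∧ X.trace.re ≤ 1}

/-- The Gram matrix of a list of vectors in `ℂ^d`. -/
def gramMatrix {n d : ℕ} (ψ : Fin n → (Fin d → ℂ)) : Matrix (Fin n) (Fin n) ℂ :=
  Matrix.of fun i j => star (ψ i) ⬝ᵥ ψ j

/-- A list of states `ψ₁, …, ψₙ` is `k`-learnable if there is a POVM indexed by the
`k`-element subsets of `{1, …, n}` such that `⟨ψᵢ, M_S ψᵢ⟩ = 0` whenever `i ∉ S`. -/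
def KLearnable {n d : ℕ} (k : ℕ) (ψ : Fin n → (Fin d → ℂ)) : Prop :=
  ∃ M : {S : Finset (Fin n) // S.card = k} → Matrix (Fin d) (Fin d) ℂ,
    (∀ S, (M S).PosSemidef) ∧ (∑ S, M S) = 1 ∧
    ∀ (S : {S : Finset (Fin n) // S.card = k}) (i : Fin n),
      i ∉ S.val → star (ψ i) ⬝ᵥ ((M S) *ᵥ ψ i) = 0

/-- The Frobenius norm of a square complex matrix. -/
def frobNorm {m : ℕ} (A : Matrix (Fin m) (Fin m) ℂ) : ℝ :=
  Real.sqrt (∑ i, ∑ j, ‖A i j‖ ^ 2)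

/- ===================== auxiliary lemmas ===================== -/

lemma star_single_one {m : ℕ} (i : Fin m) :
    star (Pi.single i (1:ℂ) : Fin m → ℂ) = Pi.single i 1 := by
  ext l; simp [Pi.single_apply, apply_ite (star : ℂ → ℂ)]

lemma isClosed_nonneg_complex : IsClosed {z : ℂ | 0 ≤ z} := by
  have : {z : ℂ | 0 ≤ z} = {z : ℂ | 0 ≤ z.re} ∩ {z : ℂ | (0:ℝ) = z.im} := by
    ext z; simp [Complex.le_def, eq_comm]
  rw [this]
  exact (isClosed_le continuous_const Complex.continuous_re).inter
    (isClosed_eq continuous_const Complex.continuous_im)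

lemma psd_smul_real {m : ℕ} {M : Matrix (Fin m) (Fin m) ℂ} (hM : M.PosSemidef) {c : ℝ}
    (hc : 0 ≤ c) : ((c:ℂ) • M).PosSemidef := by
  refine Matrix.PosSemidef.of_dotProduct_mulVec_nonneg ?_ ?_
  · unfold Matrix.IsHermitian
    rw [conjTranspose_smul, hM.1.eq, Complex.star_def, Complex.conj_ofReal]
  · intro x
    rw [smul_mulVec, dotProduct_smul]
    exact mul_nonneg (by exact_mod_cast hc) (hM.dotProduct_mulVec_nonneg x)

lemma quad_expand {m : ℕ} (M : Matrix (Fin m) (Fin m) ℂ) (i j : Fin m) (c : ℂ) :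
    star ((Pi.single i (1:ℂ) : Fin m → ℂ) + c • (Pi.single j (1:ℂ) : Fin m → ℂ)) ⬝ᵥ
      (M *ᵥ ((Pi.single i (1:ℂ) : Fin m → ℂ) + c • (Pi.single j (1:ℂ) : Fin m → ℂ))) =
    M i i + c * M i j + star c * M j i + star c * c * M j j := by
  simp only [star_add, star_smul, star_single_one, mulVec_add, mulVec_smul,
    dotProduct_add, add_dotProduct, smul_dotProduct, dotProduct_smul,
    mulVec_single, single_dotProduct, one_mul, smul_eq_mul, MulOpposite.op_one, one_smul,
    Matrix.col_apply]
  ring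

lemma psd_diag_eq {m : ℕ} (M : Matrix (Fin m) (Fin m) ℂ) (l : Fin m) :
    star (Pi.single l (1:ℂ) : Fin m → ℂ) ⬝ᵥ (M *ᵥ (Pi.single l (1:ℂ) : Fin m → ℂ)) = M l l := by
  rw [star_single_one, mulVec_single, single_dotProduct]
  simp

lemma psd_diag_nonneg {m : ℕ} {M : Matrix (Fin m) (Fin m) ℂ} (hM : M.PosSemidef) (l : Fin m) :
    0 ≤ M l l := by
  have := hM.dotProduct_mulVec_nonneg (Pi.single l (1:ℂ) : Fin m → ℂ)
  rwa [psd_diag_eq] at this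

lemma psd_entry_norm_le {m : ℕ} {M : Matrix (Fin m) (Fin m) ℂ} (hM : M.PosSemidef)
    (h1 : ∀ l, (M l l).re ≤ 1) (i j : Fin m) : ‖M i j‖ ≤ 2 := by
  have hji : M j i = star (M i j) := by
    conv_lhs => rw [← hM.1.eq]
    rw [conjTranspose_apply]
  have key : ∀ c : ℂ, star c * c = 1 → -1 ≤ (c * M i j).re := by
    intro c hc
    have h0 := hM.dotProduct_mulVec_nonneg ((Pi.single i (1:ℂ) : Fin m → ℂ) + c • (Pi.single j (1:ℂ) : Fin m → ℂ))
    rw [quad_expand] at h0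
    have h0r := (Complex.le_def.mp h0).1
    rw [hji] at h0r
    have : star c * star (M i j) = star (c * M i j) := by rw [star_mul']
    rw [this, hc, one_mul] at h0r
    simp only [Complex.zero_re, Complex.add_re, Complex.conj_re, RCLike.star_def] at h0r
    have := h1 i; have := h1 j
    linarith
  have h1' := key 1 (by norm_num)
  have h2' := key (-1) (by norm_num)
  have h3' := key Complex.I (by simp [Complex.star_def, Complex.conj_I])
  have h4' := key (-Complex.I) (by simp [Complex.star_def, Complex.conj_I])
  rw [one_mul] at h1'
  rw [neg_mul, one_mul, Complex.neg_re] at h2'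
  rw [Complex.I_mul_re] at h3'
  rw [neg_mul, Complex.neg_re, Complex.I_mul_re, neg_neg] at h4'
  calc ‖M i j‖ ≤ |(M i j).re| + |(M i j).im| := Complex.norm_le_abs_re_add_abs_im _
    _ ≤ 1 + 1 := by
        gcongr <;> rw [abs_le] <;> constructor <;> linarith
    _ = 2 := by norm_num

lemma conj_diag {d n : ℕ} (ψ : Fin n → Fin d → ℂ) (M : Matrix (Fin d) (Fin d) ℂ) (i : Fin n) :
    ((Matrix.of fun x (j : Fin n) => ψ j x)ᴴ * M * (Matrix.of fun x (j : Fin n) => ψ j x)) i i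
      = star (ψ i) ⬝ᵥ (M *ᵥ ψ i) := by
  simp only [mul_apply, conjTranspose_apply, Matrix.of_apply, dotProduct, mulVec,
    Finset.sum_mul, Finset.mul_sum, Pi.star_apply]
  rw [Finset.sum_comm]
  exact Finset.sum_congr rfl fun x _ => Finset.sum_congr rfl fun y _ => by ring

lemma gram_eq {d n : ℕ} (ψ : Fin n → Fin d → ℂ) :
    (Matrix.of fun x (j : Fin n) => ψ j x)ᴴ * (Matrix.of fun x (j : Fin n) => ψ j x)
      = gramMatrix ψ := by
  ext i j
  simp [mul_apply, conjTranspose_apply, gramMatrix, dotProduct]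


lemma sum_mulVec' {m n' : ℕ} {ι' : Type*} (s : Finset ι') (f : ι' → Matrix (Fin m) (Fin n') ℂ)
    (x : Fin n' → ℂ) : (∑ T ∈ s, f T) *ᵥ x = ∑ T ∈ s, f T *ᵥ x := by
  ext l
  simp only [mulVec, dotProduct, Matrix.sum_apply, Finset.sum_apply, Finset.sum_mul]
  rw [Finset.sum_comm]

lemma dotProduct_sum' {n' : ℕ} {ι' : Type*} (s : Finset ι') (x : Fin n' → ℂ)
    (f : ι' → (Fin n' → ℂ)) : x ⬝ᵥ (∑ T ∈ s, f T) = ∑ T ∈ s, x ⬝ᵥ f T := by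
  simp only [dotProduct, Finset.sum_apply, Finset.mul_sum]
  rw [Finset.sum_comm]

lemma exists_pinv {n : ℕ} {G : Matrix (Fin n) (Fin n) ℂ} (hG : G.PosSemidef) :
    ∃ Gp : Matrix (Fin n) (Fin n) ℂ,
      Gpᴴ = Gp ∧ G * Gp = Gp * G ∧ G * Gp * G = G ∧ Gp * G * Gp = Gp := by
  have hH := hG.1
  set U : Matrix (Fin n) (Fin n) ℂ := (hH.eigenvectorUnitary : Matrix (Fin n) (Fin n) ℂ) with hU
  set e : Fin n → ℝ := hH.eigenvalues with he
  have hUU : star U * U = 1 := by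
    rw [hU]; exact Matrix.mem_unitaryGroup_iff'.mp hH.eigenvectorUnitary.2
  set D : Matrix (Fin n) (Fin n) ℂ := diagonal (fun i => (e i : ℂ)) with hD
  set Dp : Matrix (Fin n) (Fin n) ℂ :=
    diagonal (fun i => if e i = 0 then (0:ℂ) else (((e i)⁻¹ : ℝ) : ℂ)) with hDp
  have hspec : G = U * D * star U := by
    have := hH.spectral_theorem
    rw [Unitary.conjStarAlgAut_apply] at this
    exact this
  have sand : ∀ X Y : Matrix (Fin n) (Fin n) ℂ,
      (U * X * star U) * (U * Y * star U) = U * (X * Y) * star U := by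
    intro X Y
    simp only [Matrix.mul_assoc]
    rw [show star U * (U * (Y * star U)) = Y * star U by
      rw [← Matrix.mul_assoc, hUU, Matrix.one_mul]]
  have hDDp : D * Dp = Dp * D := by
    rw [hD, hDp, diagonal_mul_diagonal, diagonal_mul_diagonal]
    exact congrArg Matrix.diagonal (funext fun i => by ring)
  have hDDpD : D * Dp * D = D := by
    rw [hD, hDp, diagonal_mul_diagonal, diagonal_mul_diagonal]
    refine congrArg Matrix.diagonal (funext fun i => ?_)
    by_cases h : e i = 0
    · simp [h]
    · rw [if_neg h]; norm_cast; field_simp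
  have hDpDDp : Dp * D * Dp = Dp := by
    rw [hD, hDp, diagonal_mul_diagonal, diagonal_mul_diagonal]
    refine congrArg Matrix.diagonal (funext fun i => ?_)
    by_cases h : e i = 0
    · simp [h]
    · simp only [if_neg h]; norm_cast; field_simp
  have hDph : Dpᴴ = Dp := by
    rw [hDp, diagonal_conjTranspose]
    refine congrArg Matrix.diagonal (funext fun i => ?_)
    simp [apply_ite (star : ℂ → ℂ), Complex.star_def, Complex.conj_ofReal]
  refine ⟨U * Dp * star U, ?_, ?_, ?_, ?_⟩
  · simp only [star_eq_conjTranspose, conjTranspose_mul, conjTranspose_conjTranspose, hDph,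
      Matrix.mul_assoc]
  · rw [hspec, sand, sand, hDDp]
  · rw [hspec, sand, sand, hDDpD]
  · rw [hspec, sand, sand, hDpDDp]

/-- The POVM formulation of the average-error SDP and the Gram-matrix formulation have
the same optimal value, and both infima are attained. -/
theorem sdp_povm_eq_sdp_gram (k n d : ℕ) (hk : 0 < k) (hn : 0 < n) (hd : 0 < d)
    (hkn : k ≤ n) (ψ : Fin n → (Fin d → ℂ)) :
    ∃ α : ℝ,
      IsLeast
        {t : ℝ | ∃ M : {S : Finset (Fin n) // S.card = k} → Matrix (Fin d) (Fin d) ℂ,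
          (∀ S, (M S).PosSemidef) ∧ (∑ S, M S) = 1 ∧
          t = (1 / (n : ℝ)) *
            (∑ i, star (ψ i) ⬝ᵥ
              ((∑ S ∈ Finset.univ.filter fun S : {S : Finset (Fin n) // S.card = k} =>
                  i ∉ S.val, M S) *ᵥ ψ i)).re} α ∧
      IsLeast
        {t : ℝ | ∃ W : {S : Finset (Fin n) // S.card = k} → Matrix (Fin n) (Fin n) ℂ,
          (∀ S, (W S).PosSemidef) ∧ (∑ S, W S) = ((n : ℂ))⁻¹ • gramMatrix ψ ∧
          t = (∑ i,
            (∑ S ∈ Finset.univ.filter fun S : {S : Finset (Fin n) // S.card = k} =>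
                i ∉ S.val, W S) i i).re} α := by
  classical
  -- basic setup
  have hn0 : (n : ℝ) ≠ 0 := Nat.cast_ne_zero.mpr hn.ne'
  have hnC : (n : ℂ) ≠ 0 := Nat.cast_ne_zero.mpr hn.ne'
  set ι := {S : Finset (Fin n) // S.card = k} with hι
  obtain ⟨T₀, hT₀sub, hT₀⟩ := Finset.exists_subset_card_eq
    (show k ≤ (Finset.univ : Finset (Fin n)).card by simpa using hkn)
  set S₀ : ι := ⟨T₀, hT₀⟩ with hS₀
  set A : Matrix (Fin d) (Fin n) ℂ := Matrix.of fun x j => ψ j x with hA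
  have hgram : Aᴴ * A = gramMatrix ψ := gram_eq ψ
  set G : Matrix (Fin n) (Fin n) ℂ := gramMatrix ψ with hGdef
  have hGpsd : G.PosSemidef := by
    rw [← hgram]; exact posSemidef_conjTranspose_mul_self A
  obtain ⟨Gp, hGph, hGpcomm, hGGpG, hGpGGp⟩ := exists_pinv hGpsd
  have hdiag : ∀ (M : Matrix (Fin d) (Fin d) ℂ) (i : Fin n),
      (Aᴴ * M * A) i i = star (ψ i) ⬝ᵥ (M *ᵥ ψ i) := fun M i => conj_diag ψ M i
  -- objective function on POVMs
  set fM : (ι → Matrix (Fin d) (Fin d) ℂ) → ℝ := fun M =>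
    (1 / (n : ℝ)) *
      (∑ i, star (ψ i) ⬝ᵥ
        ((∑ S ∈ Finset.univ.filter fun S : ι => i ∉ S.val, M S) *ᵥ ψ i)).re with hfM
  set F : Set (ι → Matrix (Fin d) (Fin d) ℂ) :=
    {M | (∀ S, (M S).PosSemidef) ∧ (∑ S, M S) = 1} with hF
  -- the two value sets
  set set1 : Set ℝ :=
    {t : ℝ | ∃ M : ι → Matrix (Fin d) (Fin d) ℂ,
      (∀ S, (M S).PosSemidef) ∧ (∑ S, M S) = 1 ∧
      t = (1 / (n : ℝ)) *
        (∑ i, star (ψ i) ⬝ᵥ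
          ((∑ S ∈ Finset.univ.filter fun S : ι => i ∉ S.val, M S) *ᵥ ψ i)).re} with hset1
  set set2 : Set ℝ :=
    {t : ℝ | ∃ W : ι → Matrix (Fin n) (Fin n) ℂ,
      (∀ S, (W S).PosSemidef) ∧ (∑ S, W S) = ((n : ℂ))⁻¹ • gramMatrix ψ ∧
      t = (∑ i,
        (∑ S ∈ Finset.univ.filter fun S : ι => i ∉ S.val, W S) i i).re} with hset2
  have himg : set1 = fM '' F := by
    ext t
    constructor
    · rintro ⟨M, h1, h2, h3⟩; exact ⟨M, ⟨h1, h2⟩, h3.symm⟩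
    · rintro ⟨M, ⟨h1, h2⟩, h3⟩; exact ⟨M, h1, h2, h3.symm⟩
  -- direction 1 : set1 ⊆ set2
  have hsub12 : set1 ⊆ set2 := by
    rintro t ⟨M, hpsd, hsumM, ht⟩
    have hc : (0:ℝ) ≤ (n:ℝ)⁻¹ := by positivity
    refine ⟨fun S => (((n:ℝ)⁻¹ : ℝ) : ℂ) • (Aᴴ * M S * A),
      fun S => psd_smul_real ((hpsd S).conjTranspose_mul_mul_same A) hc, ?_, ?_⟩
    · rw [← Finset.smul_sum]
      have e1 : ∑ S : ι, Aᴴ * M S * A = Aᴴ * (∑ S, M S) * A := by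
        rw [Matrix.mul_sum, Matrix.sum_mul]
      rw [e1, hsumM, Matrix.mul_one, hgram, ← hGdef]
      congr 1
      push_cast
      ring
    · rw [ht]
      have e2 : ∀ i : Fin n,
          (∑ S ∈ Finset.univ.filter fun S : ι => i ∉ S.val,
            (((n:ℝ)⁻¹ : ℝ) : ℂ) • (Aᴴ * M S * A)) i i
          = (((n:ℝ)⁻¹ : ℝ) : ℂ) *
            (star (ψ i) ⬝ᵥ ((∑ S ∈ Finset.univ.filter fun S : ι => i ∉ S.val, M S) *ᵥ ψ i)) := by
        intro i
        rw [← Finset.smul_sum]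
        have e3 : ∑ S ∈ Finset.univ.filter fun S : ι => i ∉ S.val, Aᴴ * M S * A
            = Aᴴ * (∑ S ∈ Finset.univ.filter fun S : ι => i ∉ S.val, M S) * A := by
          rw [Matrix.mul_sum, Matrix.sum_mul]
        rw [e3, Matrix.smul_apply, hdiag, smul_eq_mul]
      rw [Finset.sum_congr rfl fun i _ => e2 i]
      rw [← Finset.mul_sum, Complex.re_ofReal_mul]
      rw [one_div]
  -- direction 2 : set2 ⊆ set1
  have hsub21 : set2 ⊆ set1 := by
    rintro t ⟨W, hWpsd, hWsum, ht⟩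
    rw [← hGdef] at hWsum
    have hker : ∀ (S : ι) (x : Fin n → ℂ), G *ᵥ x = 0 → W S *ᵥ x = 0 := by
      intro S x hx
      have hsumdot : ∑ T : ι, star x ⬝ᵥ (W T *ᵥ x) = 0 := by
        rw [← dotProduct_sum', ← sum_mulVec', hWsum, smul_mulVec, hx, smul_zero,
          dotProduct_zero]
      have hterm := (Finset.sum_eq_zero_iff_of_nonneg
        (fun T _ => (hWpsd T).dotProduct_mulVec_nonneg x)).mp hsumdot S (Finset.mem_univ S)
      exact ((hWpsd S).dotProduct_mulVec_zero_iff x).mp hterm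
    have hWproj : ∀ S : ι, (G * Gp) * W S * (Gp * G) = W S := by
      intro S
      have hGC : G * (1 - Gp * G) = 0 := by
        rw [Matrix.mul_sub, Matrix.mul_one, ← Matrix.mul_assoc, hGGpG, sub_self]
      have hWC : W S * (1 - Gp * G) = 0 := by
        ext i j
        have hcol : G *ᵥ ((1 - Gp * G) *ᵥ (Pi.single j 1 : Fin n → ℂ)) = 0 := by
          rw [mulVec_mulVec, hGC, zero_mulVec]
        have h2 := hker S _ hcol
        rw [mulVec_mulVec, mulVec_single] at h2
        have h3 := congrFun h2 i
        simpa using h3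
      have hright : W S * (Gp * G) = W S := by
        rw [Matrix.mul_sub, Matrix.mul_one] at hWC
        exact (sub_eq_zero.mp hWC).symm
      have hleft : (G * Gp) * W S = W S := by
        have h := congrArg Matrix.conjTranspose hright
        rw [conjTranspose_mul, conjTranspose_mul, hGph, hGpsd.1.eq, (hWpsd S).1.eq] at h
        exact h
      rw [hleft, hright]
    set Q : Matrix (Fin d) (Fin d) ℂ := A * Gp * Aᴴ with hQ
    have hQQ : Q * Q = Q := by
      have e1 : Q * Q = A * (Gp * (Aᴴ * A) * Gp) * Aᴴ := by
        rw [hQ]; simp only [Matrix.mul_assoc]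
      rw [e1, hgram, hGpGGp, hQ]
    have hQH : Qᴴ = Q := by
      rw [hQ, conjTranspose_mul, conjTranspose_mul, conjTranspose_conjTranspose, hGph,
        Matrix.mul_assoc]
    have hAQA : Aᴴ * Q * A = G := by
      have e1 : Aᴴ * Q * A = (Aᴴ * A) * Gp * (Aᴴ * A) := by
        rw [hQ]; simp only [Matrix.mul_assoc]
      rw [e1, hgram, hGGpG]
    have h1mQpsd : (1 - Q).PosSemidef := by
      have e : (1 - Q)ᴴ * (1 - Q) = 1 - Q := by
        rw [conjTranspose_sub, conjTranspose_one, hQH, Matrix.sub_mul, Matrix.one_mul,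
          Matrix.mul_sub, Matrix.mul_one, hQQ, sub_self, sub_zero]
      have h := posSemidef_conjTranspose_mul_self (1 - Q)
      rwa [e] at h
    have hA1QA : Aᴴ * (1 - Q) * A = 0 := by
      rw [Matrix.mul_sub, Matrix.mul_one, Matrix.sub_mul, hAQA, hgram, sub_self]
    have hbase : ∀ S : ι, Aᴴ * (A * Gp * W S * (Gp * Aᴴ)) * A = W S := by
      intro S
      have e1 : Aᴴ * (A * Gp * W S * (Gp * Aᴴ)) * A
          = ((Aᴴ * A) * Gp) * W S * (Gp * (Aᴴ * A)) := by simp only [Matrix.mul_assoc]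
      rw [e1, hgram]
      exact hWproj S
    set Mm : ι → Matrix (Fin d) (Fin d) ℂ := fun S =>
      ((n:ℝ) : ℂ) • (A * Gp * W S * (Gp * Aᴴ)) + (if S = S₀ then 1 - Q else 0) with hMm
    have hMmpsd : ∀ S, (Mm S).PosSemidef := by
      intro S
      refine Matrix.PosSemidef.add ?_ ?_
      · have hb : (A * Gp * W S * (Gp * Aᴴ)).PosSemidef := by
          have := (hWpsd S).mul_mul_conjTranspose_same (A * Gp)
          rwa [conjTranspose_mul, hGph] at this
        exact psd_smul_real hb (by positivity)
      · split
        · exact h1mQpsd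
        · exact Matrix.PosSemidef.zero
    have hMmsum : (∑ S, Mm S) = 1 := by
      rw [hMm]
      rw [Finset.sum_add_distrib, ← Finset.smul_sum]
      have e1 : ∑ S : ι, A * Gp * W S * (Gp * Aᴴ) = A * Gp * (∑ S, W S) * (Gp * Aᴴ) := by
        rw [Matrix.mul_sum, Matrix.sum_mul]
      have e2 : ∑ S : ι, (if S = S₀ then (1 : Matrix (Fin d) (Fin d) ℂ) - Q else 0) = 1 - Q := by
        rw [Finset.sum_ite_eq' Finset.univ S₀ (fun _ => (1 : Matrix (Fin d) (Fin d) ℂ) - Q)]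
        simp
      rw [e1, e2, hWsum]
      have e3 : A * Gp * ((n:ℂ)⁻¹ • G) * (Gp * Aᴴ) = (n:ℂ)⁻¹ • (A * (Gp * G * Gp) * Aᴴ) := by
        rw [Matrix.mul_smul, Matrix.smul_mul]
        congr 1
        simp only [Matrix.mul_assoc]
      rw [e3, hGpGGp, smul_smul]
      have e4 : ((n:ℝ) : ℂ) * (n:ℂ)⁻¹ = 1 := by
        push_cast
        exact mul_inv_cancel₀ hnC
      rw [e4, one_smul]
      have e5 : A * Gp * Aᴴ = Q := hQ.symm
      rw [Matrix.mul_assoc] at e5 ⊢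
      rw [e5]
      abel
    refine ⟨Mm, hMmpsd, hMmsum, ?_⟩
    have hAMA : ∀ S, Aᴴ * Mm S * A = ((n:ℝ):ℂ) • W S := by
      intro S
      rw [hMm]
      dsimp only
      rw [Matrix.mul_add, Matrix.add_mul]
      have h2 : Aᴴ * (if S = S₀ then 1 - Q else 0) * A = 0 := by
        split
        · exact hA1QA
        · rw [Matrix.mul_zero, Matrix.zero_mul]
      rw [h2, add_zero, Matrix.mul_smul, Matrix.smul_mul, hbase]
    have e6 : ∀ i : Fin n,
        star (ψ i) ⬝ᵥ ((∑ S ∈ Finset.univ.filter fun S : ι => i ∉ S.val, Mm S) *ᵥ ψ i)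
        = ((n:ℝ):ℂ) * (∑ S ∈ Finset.univ.filter fun S : ι => i ∉ S.val, W S) i i := by
      intro i
      rw [← hdiag]
      have e7 : Aᴴ * (∑ S ∈ Finset.univ.filter fun S : ι => i ∉ S.val, Mm S) * A
          = ((n:ℝ):ℂ) • (∑ S ∈ Finset.univ.filter fun S : ι => i ∉ S.val, W S) := by
        rw [Matrix.mul_sum, Matrix.sum_mul, Finset.smul_sum]
        exact Finset.sum_congr rfl fun S _ => hAMA S
      rw [e7, Matrix.smul_apply, smul_eq_mul]
    rw [ht]
    rw [Finset.sum_congr rfl fun i _ => e6 i, ← Finset.mul_sum, Complex.re_ofReal_mul]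
    field_simp
  -- attainment
  have hFne : F.Nonempty := by
    refine ⟨fun S => if S = S₀ then (1 : Matrix (Fin d) (Fin d) ℂ) else 0, fun S => ?_, ?_⟩
    · dsimp only; split
      · exact Matrix.PosSemidef.one
      · exact Matrix.PosSemidef.zero
    · rw [Finset.sum_ite_eq' Finset.univ S₀ (fun _ => (1 : Matrix (Fin d) (Fin d) ℂ))]
      simp
  have hFcl : IsClosed F := by
    have h2 : IsClosed {M : ι → Matrix (Fin d) (Fin d) ℂ | (∑ S, M S) = 1} := by
      have e : {M : ι → Matrix (Fin d) (Fin d) ℂ | (∑ S, M S) = 1}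
          = ⋂ i, ⋂ j, {M : ι → Matrix (Fin d) (Fin d) ℂ |
              (∑ S, M S i j) = (1 : Matrix (Fin d) (Fin d) ℂ) i j} := by
        ext M
        simp only [Set.mem_setOf_eq, Set.mem_iInter, ← Matrix.ext_iff, Matrix.sum_apply]
      rw [e]
      refine isClosed_iInter fun i => isClosed_iInter fun j => isClosed_eq ?_ continuous_const
      exact continuous_finset_sum _ fun S _ => (continuous_apply S).matrix_elem i j
    have h1 : ∀ S : ι, IsClosed {M : ι → Matrix (Fin d) (Fin d) ℂ | (M S).PosSemidef} := by
      intro S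
      have e : {M : ι → Matrix (Fin d) (Fin d) ℂ | (M S).PosSemidef}
          = (⋂ i, ⋂ j, {M : ι → Matrix (Fin d) (Fin d) ℂ | star (M S j i) = M S i j}) ∩
            (⋂ x : Fin d → ℂ, (fun M : ι → Matrix (Fin d) (Fin d) ℂ =>
              star x ⬝ᵥ (M S *ᵥ x)) ⁻¹' {z : ℂ | 0 ≤ z}) := by
        ext M
        simp only [Set.mem_setOf_eq, Set.mem_inter_iff, Set.mem_iInter, Set.mem_preimage]
        constructor
        · intro h
          refine ⟨fun i j => ?_, fun x => h.dotProduct_mulVec_nonneg x⟩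
          calc star (M S j i) = (M S)ᴴ i j := (conjTranspose_apply _ _ _).symm
            _ = M S i j := by rw [h.1.eq]
        · intro h
          refine Matrix.PosSemidef.of_dotProduct_mulVec_nonneg ?_ fun x => h.2 x
          ext i j
          rw [conjTranspose_apply]
          exact h.1 i j
      rw [e]
      refine IsClosed.inter
        (isClosed_iInter fun i => isClosed_iInter fun j => isClosed_eq
          ((continuous_apply S).matrix_elem j i).star
          ((continuous_apply S).matrix_elem i j))
        (isClosed_iInter fun x => isClosed_nonneg_complex.preimage ?_)
      exact Continuous.dotProduct continuous_const
        ((continuous_apply S).matrix_mulVec continuous_const)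
    have e : F = (⋂ S : ι, {M : ι → Matrix (Fin d) (Fin d) ℂ | (M S).PosSemidef}) ∩
        {M : ι → Matrix (Fin d) (Fin d) ℂ | (∑ S, M S) = 1} := by
      ext M
      simp only [hF, Set.mem_setOf_eq, Set.mem_inter_iff, Set.mem_iInter]
    rw [e]
    exact (isClosed_iInter h1).inter h2
  have hFbd : F ⊆ Set.pi Set.univ (fun _ : ι => Set.pi Set.univ
      (fun _ : Fin d => Set.pi Set.univ (fun _ : Fin d => Metric.closedBall (0:ℂ) 2))) := by
    intro M hM
    apply Set.mem_univ_pi.mpr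
    intro S
    apply Set.mem_univ_pi.mpr
    intro i
    apply Set.mem_univ_pi.mpr
    intro j
    rw [Metric.mem_closedBall, dist_zero_right]
    refine psd_entry_norm_le (hM.1 S) ?_ i j
    intro l
    have hnonneg : ∀ T : ι, 0 ≤ M T l l := fun T => psd_diag_nonneg (hM.1 T) l
    have hsum : ∑ T : ι, M T l l = (1 : Matrix (Fin d) (Fin d) ℂ) l l := by
      rw [← Matrix.sum_apply l l Finset.univ (fun T => M T), hM.2]
    have hle : M S l l ≤ 1 := by
      have h := Finset.single_le_sum (f := fun T : ι => M T l l)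
        (fun T _ => hnonneg T) (Finset.mem_univ S)
      rw [hsum, Matrix.one_apply_eq] at h
      exact h
    have h := (Complex.le_def.mp hle).1
    simpa using h
  have hKcomp : IsCompact (Set.pi Set.univ (fun _ : ι => Set.pi Set.univ
      (fun _ : Fin d => Set.pi Set.univ (fun _ : Fin d => Metric.closedBall (0:ℂ) 2)))) := by
    refine isCompact_univ_pi fun S => isCompact_univ_pi fun i => isCompact_univ_pi fun j => ?_
    exact isCompact_closedBall 0 2
  have hFcomp : IsCompact F := hKcomp.of_isClosed_subset hFcl hFbd
  have hfc : Continuous fM := by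
    refine continuous_const.mul (Complex.continuous_re.comp ?_)
    refine continuous_finset_sum _ fun i _ => ?_
    exact Continuous.dotProduct continuous_const
      ((continuous_finset_sum _ fun S _ => continuous_apply S).matrix_mulVec continuous_const)
  obtain ⟨α, hα⟩ := ((hFcomp.image hfc).exists_isLeast (hFne.image fM)).imp
    (fun α h => h)
  rw [← himg] at hα
  exact ⟨α, hα, ⟨hsub12 hα.1, fun t ht => hα.2 (hsub21 ht)⟩⟩
end
end

section
/- Let n, k be positive integers with 1 ≤ k ≤ n. The set of extreme points of the convex set I_k equals {v v* : v ∈ ℂ^n, ‖v‖_2 = 1, and v has at most k nonzero entries} ∪ {0}. -/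
open Matrix BigOperators Finset ComplexOrder

noncomputable section

namespace IkAux

variable {n : ℕ}

/-- `vv*` applied to a vector. -/
lemma vecMulVec_mulVec (v x : Fin n → ℂ) :
    vecMulVec v (star v) *ᵥ x = (star v ⬝ᵥ x) • v := by
  funext i
  simp [vecMulVec, mulVec, dotProduct, Finset.sum_mul, Finset.mul_sum]
  ring_nf

lemma vecMulVec_isHermitian (v : Fin n → ℂ) :
    (vecMulVec v (star v)).IsHermitian := by
  ext i j
  simp [conjTranspose_apply, vecMulVec_apply, mul_comm]

lemma dot_vecMulVec (v x : Fin n → ℂ) :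
    star x ⬝ᵥ (vecMulVec v (star v) *ᵥ x) = star (star v ⬝ᵥ x) * (star v ⬝ᵥ x) := by
  rw [vecMulVec_mulVec, dotProduct_smul]
  have : star x ⬝ᵥ v = star (star v ⬝ᵥ x) := by
    simp [dotProduct, Finset.sum_comm, mul_comm]
  rw [smul_eq_mul, this]
  ring

lemma vecMulVec_posSemidef (v : Fin n → ℂ) :
    (vecMulVec v (star v)).PosSemidef := by
  refine .of_dotProduct_mulVec_nonneg (vecMulVec_isHermitian v) fun x => ?_
  rw [dot_vecMulVec]
  exact star_mul_self_nonneg _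

lemma vecMulVec_trace (v : Fin n → ℂ) :
    (vecMulVec v (star v)).trace = ((∑ i, ‖v i‖ ^ 2 : ℝ) : ℂ) := by
  simp only [trace, diag_apply, vecMulVec_apply, Pi.star_apply]
  push_cast
  refine Finset.sum_congr rfl fun i _ => ?_
  rw [Complex.star_def, Complex.mul_conj]
  norm_cast
  rw [Complex.normSq_eq_norm_sq]


lemma real_smul_eq (a : ℝ) (X : Matrix (Fin n) (Fin n) ℂ) :
    a • X = (a : ℂ) • X := by
  ext i j
  simp [Complex.real_smul]

lemma posSemidef_smul {X : Matrix (Fin n) (Fin n) ℂ} (hX : X.PosSemidef)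
    {a : ℝ} (ha : 0 ≤ a) : (a • X).PosSemidef := by
  rw [real_smul_eq]
  refine .of_dotProduct_mulVec_nonneg ?_ ?_
  · ext i j
    simp only [conjTranspose_apply, Matrix.smul_apply, smul_eq_mul, star_mul',
      Complex.star_def, Complex.conj_ofReal]
    rw [← hX.1.apply i j]
    simp [mul_comm]
  · intro x
    rw [smul_mulVec, dotProduct_smul, smul_eq_mul]
    exact mul_nonneg (by exact_mod_cast Complex.zero_le_real.mpr ha) (hX.dotProduct_mulVec_nonneg x)

lemma posSemidef_add {X Y : Matrix (Fin n) (Fin n) ℂ} (hX : X.PosSemidef)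
    (hY : Y.PosSemidef) : (X + Y).PosSemidef := by
  refine .of_dotProduct_mulVec_nonneg (hX.1.add hY.1) fun x => ?_
  rw [add_mulVec, dotProduct_add]
  exact add_nonneg (hX.dotProduct_mulVec_nonneg x) (hY.dotProduct_mulVec_nonneg x)

lemma psd_diag_nonneg {X : Matrix (Fin n) (Fin n) ℂ} (hX : X.PosSemidef) (i : Fin n) :
    0 ≤ X i i := by
  have := hX.dotProduct_mulVec_nonneg (Pi.single i 1)
  simpa [mulVec_single, dotProduct, Pi.single_apply] using this

lemma psd_trace_re_nonneg {X : Matrix (Fin n) (Fin n) ℂ} (hX : X.PosSemidef) :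
    0 ≤ X.trace.re := by
  rw [trace, Complex.re_sum]
  exact Finset.sum_nonneg fun i _ => (Complex.le_def.mp (psd_diag_nonneg hX i)).1

lemma psd_trace_im_zero {X : Matrix (Fin n) (Fin n) ℂ} (hX : X.PosSemidef) :
    X.trace.im = 0 := by
  rw [trace, Complex.im_sum]
  exact Finset.sum_eq_zero fun i _ => ((Complex.le_def.mp (psd_diag_nonneg hX i)).2).symm

lemma psd_trace_nonpos_eq_zero {X : Matrix (Fin n) (Fin n) ℂ} (hX : X.PosSemidef)
    (h : X.trace.re ≤ 0) : X = 0 := by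
  have hdiag : ∀ i, X i i = 0 := by
    have hresum : ∑ i, (X i i).re = 0 := by
      have h1 : X.trace.re = ∑ i, (X i i).re := by rw [trace, Complex.re_sum]; rfl
      have h2 : 0 ≤ ∑ i, (X i i).re := by
        exact Finset.sum_nonneg fun i _ => (Complex.le_def.mp (psd_diag_nonneg hX i)).1
      linarith [h1 ▸ h]
    intro i
    have hre : (X i i).re = 0 := by
      have := Finset.sum_eq_zero_iff_of_nonneg
        (fun i _ => (Complex.le_def.mp (psd_diag_nonneg hX i)).1) |>.mp hresum i (by simp)
      exact this
    have him : (X i i).im = 0 := ((Complex.le_def.mp (psd_diag_nonneg hX i)).2).symm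
    exact Complex.ext hre him
  -- each column is zero
  have hcol : ∀ i, X *ᵥ Pi.single i 1 = 0 := by
    intro i
    rw [← hX.dotProduct_mulVec_zero_iff]
    simpa [mulVec_single, dotProduct, Pi.single_apply] using hdiag i
  ext i j
  have := congrFun (hcol j) i
  simpa [mulVec_single] using this

lemma ext_of_mulVec {A B : Matrix (Fin n) (Fin n) ℂ}
    (h : ∀ x, A *ᵥ x = B *ᵥ x) : A = B := by
  ext i j
  have := congrFun (h (Pi.single j 1)) i
  simpa [mulVec_single] using this

lemma herm_swap {y : Matrix (Fin n) (Fin n) ℂ} (hy : y.IsHermitian) (a b : Fin n → ℂ) :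
    star a ⬝ᵥ (y *ᵥ b) = star (star b ⬝ᵥ (y *ᵥ a)) := by
  rw [star_dotProduct, star_mulVec, hy.eq, dotProduct_mulVec]


/-- If `y` is PSD and dominated by a multiple of the rank-one projection `v v*`
with `v` a unit vector, then `y` is a multiple of `v v*`. -/
lemma psd_dominated {v : Fin n → ℂ} (hv : star v ⬝ᵥ v = 1)
    {y : Matrix (Fin n) (Fin n) ℂ} (hy : y.PosSemidef) (t : ℂ)
    (hd : (t • vecMulVec v (star v) - y).PosSemidef) :
    y = (star v ⬝ᵥ (y *ᵥ v)) • vecMulVec v (star v) := by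
  set W := vecMulVec v (star v) with hW
  -- Step A: y kills vectors orthogonal to v
  have stepA : ∀ x : Fin n → ℂ, star v ⬝ᵥ x = 0 → y *ᵥ x = 0 := by
    intro x hx
    have h1 := hd.dotProduct_mulVec_nonneg x
    rw [sub_mulVec, dotProduct_sub, smul_mulVec, dotProduct_smul,
      dot_vecMulVec, hx] at h1
    simp only [mul_zero, smul_zero, zero_sub, Left.nonneg_neg_iff] at h1
    have h2 := hy.dotProduct_mulVec_nonneg x
    exact (hy.dotProduct_mulVec_zero_iff x).mp (le_antisymm h1 h2)
  set c := star v ⬝ᵥ (y *ᵥ v) with hc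
  -- Step B : y *ᵥ v = c • v
  have stepB : y *ᵥ v = c • v := by
    set w := y *ᵥ v - c • v with hw
    have hvw : star v ⬝ᵥ w = 0 := by
      rw [hw, dotProduct_sub, dotProduct_smul, hv, smul_eq_mul, mul_one, ← hc, sub_self]
    have hyw : y *ᵥ w = 0 := stepA w hvw
    have key : star w ⬝ᵥ w = 0 := by
      have e1 : star w ⬝ᵥ (y *ᵥ v) = star (star v ⬝ᵥ (y *ᵥ w)) := herm_swap hy.1 w v
      rw [hyw, dotProduct_zero, star_zero] at e1
      have e2 : star w ⬝ᵥ (y *ᵥ v) = star w ⬝ᵥ w + c * (star w ⬝ᵥ v) := by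
        have : y *ᵥ v = w + c • v := by rw [hw]; abel
        rw [this, dotProduct_add, dotProduct_smul, smul_eq_mul]
      have e3 : star w ⬝ᵥ v = 0 := by
        have := congrArg star hvw
        rwa [star_dotProduct, star_star, star_zero] at this
      rw [e2, e3, mul_zero, add_zero] at e1
      exact e1
    have h0 : w = 0 := dotProduct_star_self_eq_zero.mp key
    rw [hw] at h0
    exact sub_eq_zero.mp h0
  -- Step C : equality of matrices via action on vectors
  refine ext_of_mulVec fun x => ?_
  have hdecomp : x = (star v ⬝ᵥ x) • v + (x - (star v ⬝ᵥ x) • v) := by abel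
  have hperp : star v ⬝ᵥ (x - (star v ⬝ᵥ x) • v) = 0 := by
    rw [dotProduct_sub, dotProduct_smul, hv, smul_eq_mul, mul_one, sub_self]
  calc y *ᵥ x = y *ᵥ ((star v ⬝ᵥ x) • v + (x - (star v ⬝ᵥ x) • v)) := by rw [← hdecomp]
    _ = (star v ⬝ᵥ x) • (y *ᵥ v) + y *ᵥ (x - (star v ⬝ᵥ x) • v) := by
        rw [mulVec_add, mulVec_smul]
    _ = (star v ⬝ᵥ x) • (c • v) := by rw [stepA _ hperp, add_zero, stepB]
    _ = (c • W) *ᵥ x := by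
        rw [smul_mulVec, hW, vecMulVec_mulVec, smul_comm]


end IkAux

namespace IkAux2

open IkAux

variable {n k : ℕ}

lemma suppCard_smul_le (a : ℂ) (v : Fin n → ℂ) : suppCard (a • v) ≤ suppCard v := by
  apply Finset.card_le_card
  intro i hi
  simp only [Finset.mem_filter, Finset.mem_univ, true_and, Pi.smul_apply, smul_eq_mul] at hi ⊢
  exact fun h => hi (by rw [h, mul_zero])

lemma vecMulVec_smul (a : ℝ) (v : Fin n → ℂ) :
    vecMulVec ((a : ℂ) • v) (star ((a : ℂ) • v)) = ((a^2 : ℝ) : ℂ) • vecMulVec v (star v) := by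
  ext i j
  simp only [vecMulVec_apply, Pi.star_apply, Pi.smul_apply, smul_eq_mul, Matrix.smul_apply,
    star_mul', Complex.star_def, Complex.conj_ofReal]
  push_cast
  ring

lemma kincoherent_smul {X : Matrix (Fin n) (Fin n) ℂ} (hX : KIncoherent k X)
    {a : ℝ} (ha : 0 ≤ a) : KIncoherent k (a • X) := by
  obtain ⟨m, v, hsupp, rfl⟩ := hX
  refine ⟨m, fun i => ((Real.sqrt a : ℂ)) • v i, fun i => le_trans (suppCard_smul_le _ _) (hsupp i), ?_⟩
  rw [Finset.smul_sum]
  refine Finset.sum_congr rfl fun i _ => ?_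
  rw [vecMulVec_smul, Real.sq_sqrt ha, real_smul_eq]

lemma kincoherent_add {X Y : Matrix (Fin n) (Fin n) ℂ} (hX : KIncoherent k X)
    (hY : KIncoherent k Y) : KIncoherent k (X + Y) := by
  obtain ⟨m1, v1, hs1, rfl⟩ := hX
  obtain ⟨m2, v2, hs2, rfl⟩ := hY
  refine ⟨m1 + m2, Fin.append v1 v2, ?_, ?_⟩
  · intro i
    rcases lt_or_ge (i : ℕ) m1 with h | h
    · have : Fin.append v1 v2 i = v1 (i.castLT h) := by
        rw [← Fin.append_left v1 v2 (i.castLT h)]; congr 1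
      rw [this]; exact hs1 _
    · obtain ⟨j, rfl⟩ : ∃ j : Fin m2, Fin.natAdd m1 j = i := by
        refine ⟨⟨i - m1, by omega⟩, ?_⟩
        ext; simp [Fin.natAdd]; omega
      rw [Fin.append_right]; exact hs2 _
  · rw [Fin.sum_univ_add]
    congr 1
    · exact Finset.sum_congr rfl fun i _ => by rw [Fin.append_left]
    · exact Finset.sum_congr rfl fun i _ => by rw [Fin.append_right]

lemma trace_re_smul (a : ℝ) (X : Matrix (Fin n) (Fin n) ℂ) :
    (a • X).trace.re = a * X.trace.re := by
  rw [real_smul_eq, trace_smul, smul_eq_mul, Complex.mul_re]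
  simp

lemma ik_convex : Convex ℝ (Ik n k) := by
  rintro X ⟨hX1, hX2, hX3⟩ Y ⟨hY1, hY2, hY3⟩ a b ha hb hab
  refine ⟨posSemidef_add (posSemidef_smul hX1 ha) (posSemidef_smul hY1 hb),
    kincoherent_add (kincoherent_smul hX2 ha) (kincoherent_smul hY2 hb), ?_⟩
  rw [trace_add, Complex.add_re, trace_re_smul, trace_re_smul]
  nlinarith

lemma zero_mem_ik : (0 : Matrix (Fin n) (Fin n) ℂ) ∈ Ik n k := by
  refine ⟨Matrix.PosSemidef.zero, ⟨0, fun i => i.elim0, fun i => i.elim0, by simp⟩, by simp⟩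

lemma vecMulVec_mem_ik {v : Fin n → ℂ} (hs : suppCard v ≤ k) (hn : (∑ i, ‖v i‖ ^ 2) ≤ 1) :
    vecMulVec v (star v) ∈ Ik n k := by
  refine ⟨vecMulVec_posSemidef v, ⟨1, fun _ => v, fun _ => hs, by simp⟩, ?_⟩
  rw [vecMulVec_trace, Complex.ofReal_re]
  exact hn


/-- An extreme point that is a finite convex combination of points of a convex set
equals each of the points occurring with positive weight. -/
lemma extreme_convex_sum {E : Type*} [AddCommGroup E] [Module ℝ E] {K : Set E}
    (hK : Convex ℝ K) {X : E} (hX : X ∈ Set.extremePoints ℝ K) {ι : Type*} [DecidableEq ι] :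
    ∀ (s : Finset ι) (c : ι → ℝ) (y : ι → E), (∀ i ∈ s, 0 < c i) → (∑ i ∈ s, c i) = 1 →
      (∀ i ∈ s, y i ∈ K) → X = ∑ i ∈ s, c i • y i → ∀ i ∈ s, y i = X := by
  intro s
  induction s using Finset.induction_on with
  | empty => intro c y _ hsum _ _ i hi; exact absurd hi (Finset.notMem_empty i)
  | insert _ _ ha =>
    rename_i a s ih
    intro c y hpos hsum hmem hrep i hi
    rw [Finset.sum_insert ha] at hsum hrep
    by_cases hs : s = ∅
    · subst hs
      simp only [Finset.sum_empty, add_zero] at hsum hrep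
      rw [hsum, one_smul] at hrep
      simp only [Finset.mem_insert, Finset.notMem_empty, or_false] at hi
      subst hi
      exact hrep.symm
    · have hsne : s.Nonempty := Finset.nonempty_iff_ne_empty.mpr hs
      set t : ℝ := ∑ j ∈ s, c j with ht
      have htpos : 0 < t := Finset.sum_pos (fun j hj => hpos j (Finset.mem_insert_of_mem hj)) hsne
      have hca : 0 < c a := hpos a (Finset.mem_insert_self a s)
      set z : E := ∑ j ∈ s, (c j / t) • y j with hz
      have hzmem : z ∈ K := by
        refine hK.sum_mem (fun j hj => le_of_lt (div_pos (hpos j (Finset.mem_insert_of_mem hj)) htpos)) ?_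
          (fun j hj => hmem j (Finset.mem_insert_of_mem hj))
        rw [← Finset.sum_div, ← ht, div_self (ne_of_gt htpos)]
      have htz : t • z = ∑ j ∈ s, c j • y j := by
        rw [hz, Finset.smul_sum]
        exact Finset.sum_congr rfl fun j hj => by
          rw [smul_smul, mul_div_cancel₀ _ (ne_of_gt htpos)]
      have hseg : X ∈ openSegment ℝ (y a) z :=
        ⟨c a, t, hca, htpos, hsum, by rw [htz, ← hrep]⟩
      have hres := (mem_extremePoints.mp hX).2 _ (hmem a (Finset.mem_insert_self a s)) _ hzmem hseg
      rcases Finset.mem_insert.mp hi with rfl | his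
      · exact hres.1
      · refine ih (fun j => c j / t) y
          (fun j hj => div_pos (hpos j (Finset.mem_insert_of_mem hj)) htpos)
          (by rw [← Finset.sum_div, ← ht, div_self (ne_of_gt htpos)])
          (fun j hj => hmem j (Finset.mem_insert_of_mem hj))
          (by rw [← hz, hres.2]) i his

end IkAux2

/-- The extreme points of `I_k` are exactly `0` together with the rank-one matrices `v v*`
for unit vectors `v` having at most `k` nonzero entries. -/
theorem extremePoints_Ik (n k : ℕ) (hn : 0 < n) (hk : 1 ≤ k) (hkn : k ≤ n) :
    Set.extremePoints ℝ (Ik n k) =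
      {X : Matrix (Fin n) (Fin n) ℂ | ∃ v : Fin n → ℂ,
        suppCard v ≤ k ∧ (∑ i, ‖v i‖ ^ 2) = 1 ∧ X = vecMulVec v (star v)} ∪ {0} := by
  classical
  ext X
  simp only [Set.mem_union, Set.mem_setOf_eq, Set.mem_singleton_iff]
  constructor
  · rintro ⟨hXmem, hXext⟩
    by_cases hX0 : X = 0
    · right; exact hX0
    left
    obtain ⟨hPSD, ⟨m, v, hsupp, hrep⟩, htr⟩ := hXmem
    have htpos : 0 < X.trace.re := by
      by_contra h
      exact hX0 (IkAux.psd_trace_nonpos_eq_zero hPSD (not_lt.mp h))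
    -- the trace must equal 1
    have htr1 : X.trace.re = 1 := by
      by_contra hne
      have hlt : X.trace.re < 1 := lt_of_le_of_ne htr hne
      set t := X.trace.re with ht
      have hY : (t⁻¹ • X) ∈ Ik n k := by
        refine ⟨IkAux.posSemidef_smul hPSD (inv_nonneg.mpr (le_of_lt htpos)),
          IkAux2.kincoherent_smul ⟨m, v, hsupp, hrep⟩ (inv_nonneg.mpr (le_of_lt htpos)), ?_⟩
        rw [IkAux2.trace_re_smul, ← ht, inv_mul_cancel₀ (ne_of_gt htpos)]
      have hseg : X ∈ openSegment ℝ (t⁻¹ • X) (0 : Matrix (Fin n) (Fin n) ℂ) := by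
        refine ⟨t, 1 - t, htpos, by linarith, by ring, ?_⟩
        rw [smul_zero, add_zero, smul_smul, mul_inv_cancel₀ (ne_of_gt htpos), one_smul]
      exact hX0 ((mem_extremePoints.mp (⟨⟨hPSD, ⟨m, v, hsupp, hrep⟩, htr⟩, hXext⟩ : X ∈ Set.extremePoints ℝ (Ik n k))).2 _ hY _ IkAux2.zero_mem_ik hseg).2.symm
    -- set up the convex decomposition
    set s : Finset (Fin m) := Finset.univ.filter (fun i => v i ≠ 0) with hs
    set c : Fin m → ℝ := fun i => ∑ j, ‖v i j‖ ^ 2 with hc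
    set u : Fin m → (Fin n → ℂ) := fun i => (((Real.sqrt (c i))⁻¹ : ℝ) : ℂ) • v i with hu
    set y : Fin m → Matrix (Fin n) (Fin n) ℂ := fun i => vecMulVec (u i) (star (u i)) with hy
    have hcpos : ∀ i ∈ s, 0 < c i := by
      intro i hi
      rw [hs, Finset.mem_filter] at hi
      obtain ⟨j0, hj0⟩ : ∃ j0, v i j0 ≠ 0 := Function.ne_iff.mp hi.2
      exact Finset.sum_pos' (fun j _ => sq_nonneg _)
        ⟨j0, Finset.mem_univ j0, pow_pos (norm_pos_iff.mpr hj0) 2⟩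
    have hczero : ∀ i ∉ s, c i = 0 := by
      intro i hi
      rw [hs, Finset.mem_filter, not_and] at hi
      have : v i = 0 := not_not.mp (hi (Finset.mem_univ i))
      simp [hc, this]
    have hyW : ∀ i ∈ s, y i = ((c i)⁻¹ : ℝ) • vecMulVec (v i) (star (v i)) := by
      intro i hi
      have he : y i = vecMulVec ((((Real.sqrt (c i))⁻¹ : ℝ) : ℂ) • v i)
          (star ((((Real.sqrt (c i))⁻¹ : ℝ) : ℂ) • v i)) := rfl
      rw [he, IkAux2.vecMulVec_smul, ← Real.sqrt_inv,
        Real.sq_sqrt (inv_nonneg.mpr (le_of_lt (hcpos i hi))), IkAux.real_smul_eq]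
    have hnorm_u : ∀ i ∈ s, (∑ j, ‖u i j‖ ^ 2) = 1 := by
      intro i hi
      have : ∀ j, ‖u i j‖ ^ 2 = (c i)⁻¹ * ‖v i j‖ ^ 2 := by
        intro j
        have he : u i j = (((Real.sqrt (c i))⁻¹ : ℝ) : ℂ) * v i j := rfl
        rw [he, norm_mul, mul_pow, Complex.norm_real, Real.norm_eq_abs,
          abs_of_nonneg (inv_nonneg.mpr (Real.sqrt_nonneg _)), ← Real.sqrt_inv,
          Real.sq_sqrt (inv_nonneg.mpr (le_of_lt (hcpos i hi)))]
      simp_rw [this]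
      rw [← Finset.mul_sum]
      exact inv_mul_cancel₀ (ne_of_gt (hcpos i hi))
    have hXsum : X = ∑ i ∈ s, c i • y i := by
      have h1 : ∀ i ∈ s, c i • y i = vecMulVec (v i) (star (v i)) := by
        intro i hi
        rw [hyW i hi, smul_smul, mul_inv_cancel₀ (ne_of_gt (hcpos i hi)), one_smul]
      rw [Finset.sum_congr rfl h1, hrep]
      symm
      apply Finset.sum_subset (Finset.subset_univ s)
      intro i _ hi
      rw [hs, Finset.mem_filter, not_and] at hi
      have : v i = 0 := not_not.mp (hi (Finset.mem_univ i))
      ext a b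
      simp [vecMulVec_apply, this]
    have hcsum : (∑ i ∈ s, c i) = 1 := by
      have h1 : X.trace = ((∑ i, c i : ℝ) : ℂ) := by
        rw [hrep, trace_sum]
        push_cast
        exact Finset.sum_congr rfl fun i _ => IkAux.vecMulVec_trace (v i)
      have h2 : (∑ i, c i) = 1 := by
        have h := congrArg Complex.re h1
        rw [htr1, Complex.ofReal_re] at h
        exact h.symm
      rw [← h2]
      exact Finset.sum_subset (Finset.subset_univ s) fun i _ hi => hczero i hi
    have hymem : ∀ i ∈ s, y i ∈ Ik n k := by
      intro i hi
      exact IkAux2.vecMulVec_mem_ik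
        (le_trans (IkAux2.suppCard_smul_le ((((Real.sqrt (c i))⁻¹ : ℝ)) : ℂ) (v i)) (hsupp i))
        (le_of_eq (hnorm_u i hi))
    have hsne : s.Nonempty := by
      rcases Finset.eq_empty_or_nonempty s with h | h
      · exfalso
        apply hX0
        rw [hXsum, h, Finset.sum_empty]
      · exact h
    obtain ⟨i0, hi0⟩ := hsne
    have := IkAux2.extreme_convex_sum IkAux2.ik_convex ⟨⟨hPSD, ⟨m, v, hsupp, hrep⟩, htr⟩, hXext⟩
      s c y hcpos hcsum hymem hXsum i0 hi0
    exact ⟨u i0, le_trans (IkAux2.suppCard_smul_le ((((Real.sqrt (c i0))⁻¹ : ℝ)) : ℂ) (v i0))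
      (hsupp i0), hnorm_u i0 hi0, this.symm⟩
  · rintro (⟨v, hsupp, hnorm, rfl⟩ | rfl)
    · -- the rank-one case
      set W := vecMulVec v (star v) with hW
      have hWmem : W ∈ Ik n k := IkAux2.vecMulVec_mem_ik hsupp (le_of_eq hnorm)
      refine mem_extremePoints.mpr ⟨hWmem, fun y hy z hz hseg => ?_⟩
      obtain ⟨a, b, ha, hb, hab, heq⟩ := hseg
      have htrW : W.trace = 1 := by
        rw [hW, IkAux.vecMulVec_trace, hnorm, Complex.ofReal_one]
      have hWne : W ≠ 0 := by
        intro h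
        rw [h, trace_zero] at htrW
        exact zero_ne_one htrW
      have hv1 : star v ⬝ᵥ v = 1 := by
        have h1 : star v ⬝ᵥ v = W.trace := by
          rw [hW]
          simp [dotProduct, trace, Matrix.diag, vecMulVec_apply, mul_comm]
        rw [h1, htrW]
      have hay : (a • y) = (star v ⬝ᵥ ((a • y) *ᵥ v)) • W := by
        apply IkAux.psd_dominated hv1 (IkAux.posSemidef_smul hy.1 (le_of_lt ha)) 1
        have h2 : (1 : ℂ) • W - a • y = b • z := by
          rw [one_smul, ← heq]; abel
        rw [h2]
        exact IkAux.posSemidef_smul hz.1 (le_of_lt hb)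
      have hbz : (b • z) = (star v ⬝ᵥ ((b • z) *ᵥ v)) • W := by
        apply IkAux.psd_dominated hv1 (IkAux.posSemidef_smul hz.1 (le_of_lt hb)) 1
        have h2 : (1 : ℂ) • W - b • z = a • y := by
          rw [one_smul, ← heq]; abel
        rw [h2]
        exact IkAux.posSemidef_smul hy.1 (le_of_lt ha)
      set d := star v ⬝ᵥ ((a • y) *ᵥ v) with hd
      set e := star v ⬝ᵥ ((b • z) *ᵥ v) with he
      -- trace identities
      have hdtr : d = (a • y).trace := by
        have h3 : (a • y).trace = d * W.trace := by rw [hay, trace_smul, smul_eq_mul]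
        rw [htrW, mul_one] at h3
        exact h3.symm
      have hetr : e = (b • z).trace := by
        have h3 : (b • z).trace = e * W.trace := by rw [hbz, trace_smul, smul_eq_mul]
        rw [htrW, mul_one] at h3
        exact h3.symm
      have hytr_im : y.trace.im = 0 := IkAux.psd_trace_im_zero hy.1
      have hztr_im : z.trace.im = 0 := IkAux.psd_trace_im_zero hz.1
      have hdre : d.re = a * y.trace.re := by
        rw [hdtr, IkAux.real_smul_eq, trace_smul, smul_eq_mul, Complex.mul_re]
        simp
      have hdim : d.im = 0 := by
        rw [hdtr, IkAux.real_smul_eq, trace_smul, smul_eq_mul, Complex.mul_im]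
        simp [hytr_im]
      have here' : e.re = b * z.trace.re := by
        rw [hetr, IkAux.real_smul_eq, trace_smul, smul_eq_mul, Complex.mul_re]
        simp
      have heim : e.im = 0 := by
        rw [hetr, IkAux.real_smul_eq, trace_smul, smul_eq_mul, Complex.mul_im]
        simp [hztr_im]
      -- d + e = 1
      have hde : d + e = 1 := by
        have h4 : (d + e) • W = (1 : ℂ) • W := by
          rw [one_smul, add_smul, ← hay, ← hbz, heq]
        by_contra hne
        apply hWne
        have h5 : ((d + e) - 1) • W = 0 := by
          rw [sub_smul, h4, one_smul, sub_self]
        ext i j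
        have h6 := congrFun (congrFun h5 i) j
        simp only [Matrix.smul_apply, smul_eq_mul, Matrix.zero_apply] at h6
        rcases mul_eq_zero.mp h6 with h7 | h7
        · exact absurd (sub_eq_zero.mp h7) hne
        · simpa using h7
      -- conclude d = a and e = b
      have hdea : d.re + e.re = 1 := by
        have := congrArg Complex.re hde
        simpa using this
      have hdlea : d.re ≤ a := by
        rw [hdre]
        nlinarith [hy.2.2]
      have heleb : e.re ≤ b := by
        rw [here']
        nlinarith [hz.2.2]
      have hda : d = (a : ℂ) := by
        apply Complex.ext _ (by simpa using hdim)
        simp only [Complex.ofReal_re]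
        linarith
      have heb : e = (b : ℂ) := by
        apply Complex.ext _ (by simpa using heim)
        simp only [Complex.ofReal_re]
        linarith
      constructor
      · calc y = a⁻¹ • (a • y) := by
              rw [smul_smul, inv_mul_cancel₀ (ne_of_gt ha), one_smul]
          _ = a⁻¹ • (a • W) := by rw [hay, hda, ← IkAux.real_smul_eq]
          _ = W := by rw [smul_smul, inv_mul_cancel₀ (ne_of_gt ha), one_smul]
      · calc z = b⁻¹ • (b • z) := by
              rw [smul_smul, inv_mul_cancel₀ (ne_of_gt hb), one_smul]
          _ = b⁻¹ • (b • W) := by rw [hbz, heb, ← IkAux.real_smul_eq]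
          _ = W := by rw [smul_smul, inv_mul_cancel₀ (ne_of_gt hb), one_smul]
    · -- the zero case
      refine mem_extremePoints.mpr ⟨IkAux2.zero_mem_ik, fun y hy z hz hseg => ?_⟩
      obtain ⟨a, b, ha, hb, hab, heq⟩ := hseg
      have htr0 := congrArg (fun M : Matrix (Fin n) (Fin n) ℂ => M.trace.re) heq
      simp only [trace_add, Complex.add_re, IkAux2.trace_re_smul, trace_zero,
        Complex.zero_re] at htr0
      have hy0 : y = 0 := IkAux.psd_trace_nonpos_eq_zero hy.1
        (by nlinarith [IkAux.psd_trace_re_nonneg hy.1, IkAux.psd_trace_re_nonneg hz.1])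
      have hz0 : z = 0 := IkAux.psd_trace_nonpos_eq_zero hz.1
        (by nlinarith [IkAux.psd_trace_re_nonneg hy.1, IkAux.psd_trace_re_nonneg hz.1])
      exact ⟨hy0, hz0⟩
end
end

section
/- Let n, k be positive integers with 1 ≤ k ≤ n and let C ∈ ℂ^{n×n} be Hermitian. Then μ(k,C) := max{ Tr(C X) : X ∈ I_k } equals max(0, max{ λ_max(C_S) : S ⊆ {1,…,n}, 1 ≤ |S| ≤ k }), where C_S denotes the principal submatrix of C whose rows and columns are indexed by S, and λ_max denotes the largest eigenvalue of a Hermitian matrix. -/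
open Matrix BigOperators Finset ComplexOrder

noncomputable section

/- ## Auxiliary lemmas -/

lemma trace_mul_outer {n : ℕ} (C : Matrix (Fin n) (Fin n) ℂ) (v : Fin n → ℂ) :
    ((C * vecMulVec v (star v)).trace) = star v ⬝ᵥ (C *ᵥ v) := by
  simp only [Matrix.trace, Matrix.diag, Matrix.mul_apply, vecMulVec_apply, dotProduct, mulVec,
    Pi.star_apply, Finset.mul_sum]
  apply Finset.sum_congr rfl; intro i _
  apply Finset.sum_congr rfl; intro j _
  ring

lemma outer_posSemidef {n : ℕ} (v : Fin n → ℂ) : (vecMulVec v (star v)).PosSemidef := by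
  rw [Matrix.posSemidef_iff_dotProduct_mulVec]
  constructor
  · ext i j
    simp [conjTranspose_apply, vecMulVec_apply, mul_comm]
  · intro x
    have : star x ⬝ᵥ (vecMulVec v (star v) *ᵥ x) =
        (star ((star v) ⬝ᵥ x)) * ((star v) ⬝ᵥ x) := by
      simp only [dotProduct, mulVec, vecMulVec_apply, Pi.star_apply, Finset.mul_sum,
        Finset.sum_mul, star_sum, star_mul', star_star]
      rw [Finset.sum_comm]
      apply Finset.sum_congr rfl; intro i _
      apply Finset.sum_congr rfl; intro j _
      ring
    rw [this]
    exact star_mul_self_nonneg _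

lemma re_dotProduct_self {ι : Type*} [Fintype ι] (x : ι → ℂ) :
    (star x ⬝ᵥ x).re = ∑ i, ‖x i‖ ^ 2 := by
  simp only [dotProduct, Pi.star_apply, Complex.re_sum]
  apply Finset.sum_congr rfl; intro i _
  rw [Complex.star_def, ← Complex.normSq_eq_conj_mul_self]
  rw [Complex.ofReal_re, Complex.normSq_eq_norm_sq]

lemma trace_outer_re {n : ℕ} (v : Fin n → ℂ) :
    ((vecMulVec v (star v)).trace).re = ∑ j, ‖v j‖ ^ 2 := by
  rw [← re_dotProduct_self]
  congr 1
  simp only [Matrix.trace, Matrix.diag, vecMulVec_apply, dotProduct, Pi.star_apply]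
  apply Finset.sum_congr rfl; intro i _
  ring

lemma rayleigh_le {ι : Type*} [Fintype ι] [DecidableEq ι] {A : Matrix ι ι ℂ}
    (hA : A.IsHermitian) {c : ℝ} (hc : ∀ i, hA.eigenvalues i ≤ c) (x : ι → ℂ) :
    (star x ⬝ᵥ (A *ᵥ x)).re ≤ c * ∑ i, ‖x i‖ ^ 2 := by
  set U : Matrix ι ι ℂ := (hA.eigenvectorUnitary : Matrix ι ι ℂ) with hU
  have hM : ((c : ℂ) • (1 : Matrix ι ι ℂ) - A).PosSemidef := by
    have hUU : U * star U = 1 := by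
      simpa [hU] using hA.eigenvectorUnitary.2.2
    have hDiag : ((c : ℂ) • (1 : Matrix ι ι ℂ) - A) =
        U * (diagonal fun i => ((c - hA.eigenvalues i : ℝ) : ℂ)) * star U := by
      have hs := hA.spectral_theorem
      rw [Unitary.conjStarAlgAut_apply] at hs
      calc (c : ℂ) • (1 : Matrix ι ι ℂ) - A
          = U * ((c:ℂ) • 1) * star U - U * (diagonal (RCLike.ofReal ∘ hA.eigenvalues)) * star U := by
            rw [← hs, Matrix.mul_smul, Matrix.smul_mul, Matrix.mul_one, hUU]
        _ = U * (((c:ℂ) • 1) - diagonal (RCLike.ofReal ∘ hA.eigenvalues)) * star U := by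
            rw [Matrix.mul_sub, Matrix.sub_mul]
        _ = U * (diagonal fun i => ((c - hA.eigenvalues i : ℝ) : ℂ)) * star U := by
            congr 1
            congr 1
            rw [Matrix.smul_one_eq_diagonal, Matrix.diagonal_sub]
            congr 1
            funext i
            simp [Function.comp]
    rw [hDiag, Matrix.star_eq_conjTranspose]
    apply Matrix.PosSemidef.mul_mul_conjTranspose_same
    rw [Matrix.posSemidef_diagonal_iff]
    intro i
    rw [Complex.zero_le_real]
    linarith [hc i]
  have h0 : (0:ℝ) ≤ (star x ⬝ᵥ (((c : ℂ) • (1 : Matrix ι ι ℂ) - A) *ᵥ x)).re :=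
    hM.re_dotProduct_nonneg x
  have hexp : (star x ⬝ᵥ (((c : ℂ) • (1 : Matrix ι ι ℂ) - A) *ᵥ x)).re
      = c * ∑ i, ‖x i‖ ^ 2 - (star x ⬝ᵥ (A *ᵥ x)).re := by
    rw [Matrix.sub_mulVec, dotProduct_sub, Complex.sub_re]
    congr 1
    rw [Matrix.smul_mulVec, Matrix.one_mulVec, dotProduct_smul]
    rw [smul_eq_mul, Complex.re_ofReal_mul, re_dotProduct_self]
  rw [hexp] at h0
  linarith

lemma rayleigh_attained {ι : Type*} [Fintype ι] [DecidableEq ι] [Nonempty ι]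
    {A : Matrix ι ι ℂ} (hA : A.IsHermitian) :
    ∃ x : ι → ℂ, (∑ i, ‖x i‖ ^ 2) = 1 ∧
      (star x ⬝ᵥ (A *ᵥ x)).re = ⨆ i, hA.eigenvalues i := by
  obtain ⟨j0, hj0⟩ := Finite.exists_max hA.eigenvalues
  have hsup : (⨆ i, hA.eigenvalues i) = hA.eigenvalues j0 :=
    le_antisymm (ciSup_le hj0) (le_ciSup (Set.Finite.bddAbove (Set.finite_range _)) j0)
  refine ⟨⇑(hA.eigenvectorBasis j0), ?_, ?_⟩
  · have hnorm : ‖hA.eigenvectorBasis j0‖ = 1 := hA.eigenvectorBasis.orthonormal.1 j0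
    have h2 : ‖hA.eigenvectorBasis j0‖ ^ 2 = ∑ i, ‖(hA.eigenvectorBasis j0) i‖ ^ 2 :=
      PiLp.norm_sq_eq_of_L2 _ _
    rw [hnorm, one_pow] at h2
    exact h2.symm
  · rw [hA.mulVec_eigenvectorBasis, dotProduct_smul, hsup]
    have : (star ⇑(hA.eigenvectorBasis j0) ⬝ᵥ ⇑(hA.eigenvectorBasis j0)).re
        = ∑ i, ‖(hA.eigenvectorBasis j0) i‖ ^ 2 := re_dotProduct_self _
    rw [Complex.real_smul, Complex.re_ofReal_mul, this]
    have h2 : ‖hA.eigenvectorBasis j0‖ ^ 2 = ∑ i, ‖(hA.eigenvectorBasis j0) i‖ ^ 2 :=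
      PiLp.norm_sq_eq_of_L2 _ _
    rw [← h2, hA.eigenvectorBasis.orthonormal.1 j0, one_pow, mul_one]

lemma sum_restrict {n : ℕ} {M : Type*} [AddCommMonoid M] (S : Finset (Fin n)) (f : Fin n → M)
    (hf : ∀ i ∉ S, f i = 0) : ∑ i, f i = ∑ i : ↥S, f i :=
  ((Finset.sum_subset (Finset.subset_univ S) (fun x _ hx => hf x hx)).symm).trans
    (Finset.sum_coe_sort S f).symm

lemma quad_restrict {n : ℕ} (C : Matrix (Fin n) (Fin n) ℂ) (S : Finset (Fin n))
    (v : Fin n → ℂ) (hv : ∀ i ∉ S, v i = 0) :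
    star v ⬝ᵥ (C *ᵥ v) =
      star (fun i : ↥S => v i) ⬝ᵥ
        ((C.submatrix (Subtype.val : ↥S → Fin n) (Subtype.val : ↥S → Fin n)) *ᵥ
          fun i : ↥S => v i) := by
  unfold dotProduct
  rw [sum_restrict S _ (fun i hi => by simp [hv i hi])]
  apply Finset.sum_congr rfl
  intro i _
  congr 1
  unfold mulVec dotProduct
  exact sum_restrict S _ (fun j hj => by simp [hv j hj])

lemma normsum_restrict {n : ℕ} (S : Finset (Fin n)) (v : Fin n → ℂ) (hv : ∀ i ∉ S, v i = 0) :
    ∑ i, ‖v i‖ ^ 2 = ∑ i : ↥S, ‖v (i : Fin n)‖ ^ 2 :=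
  sum_restrict S (fun i => ‖v i‖ ^ 2) (fun i hi => by simp [hv i hi])

/-- `μ(k, C) = max(0, max over principal submatrices of size at most k of the largest
eigenvalue)`, for a Hermitian matrix `C`, and the maximum over `I_k` is attained. -/
theorem mu_eq_max_lambdaMax_submatrix (n k : ℕ) (hn : 0 < n) (hk : 1 ≤ k) (hkn : k ≤ n)
    (C : Matrix (Fin n) (Fin n) ℂ) (hC : C.IsHermitian) :
    IsGreatest {t : ℝ | ∃ X ∈ Ik n k, t = ((C * X).trace).re}
      (max 0 (sSup {t : ℝ | ∃ S : Finset (Fin n), S.Nonempty ∧ S.card ≤ k ∧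
        ∃ h : (C.submatrix (Subtype.val : ↥S → Fin n)
            (Subtype.val : ↥S → Fin n)).IsHermitian,
          t = ⨆ i : ↥S, h.eigenvalues i})) := by
  set A : Set ℝ := {t : ℝ | ∃ S : Finset (Fin n), S.Nonempty ∧ S.card ≤ k ∧
        ∃ h : (C.submatrix (Subtype.val : ↥S → Fin n)
            (Subtype.val : ↥S → Fin n)).IsHermitian,
          t = ⨆ i : ↥S, h.eigenvalues i} with hA
  set f : Finset (Fin n) → ℝ := fun S =>
    ⨆ i : ↥S, ((hC.submatrix (Subtype.val : ↥S → Fin n)).eigenvalues i) with hf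
  have hAsub : A ⊆ Set.range f := by
    rintro t ⟨S, _, _, h, ht⟩
    exact ⟨S, by rw [ht]⟩
  have hAfin : A.Finite := (Set.finite_range f).subset hAsub
  have hAne : A.Nonempty := by
    refine ⟨f {⟨0, hn⟩}, {⟨0, hn⟩}, ⟨⟨0, hn⟩, Finset.mem_singleton_self _⟩, ?_, ?_, rfl⟩
    · simpa using hk
    · exact hC.submatrix _
  have hbdd : BddAbove A := hAfin.bddAbove
  have hsup_mem : sSup A ∈ A := hAne.csSup_mem hAfin
  set M : ℝ := max 0 (sSup A) with hM
  have hM0 : (0:ℝ) ≤ M := le_max_left _ _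
  constructor
  · -- membership: M is attained
    by_cases hpos : 0 < sSup A
    · have hMeq : M = sSup A := max_eq_right hpos.le
      obtain ⟨S, hSne, hSk, h, hsup⟩ := hsup_mem
      haveI : Nonempty ↥S := ⟨⟨hSne.choose, hSne.choose_spec⟩⟩
      obtain ⟨w, hwnorm, hwval⟩ := rayleigh_attained h
      set x : Fin n → ℂ := fun i => if hi : i ∈ S then w ⟨i, hi⟩ else 0 with hx
      have hx0 : ∀ i ∉ S, x i = 0 := fun i hi => dif_neg hi
      have hxw : (fun i : ↥S => x i) = w := by
        funext i
        simp [hx]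
      refine ⟨vecMulVec x (star x), ⟨outer_posSemidef x, ⟨1, fun _ => x, ?_, ?_⟩, ?_⟩, ?_⟩
      · intro _
        refine le_trans (Finset.card_le_card ?_) hSk
        intro j hj
        simp only [Finset.mem_filter, Finset.mem_univ, true_and] at hj
        by_contra hjS
        exact hj (hx0 j hjS)
      · simp
      · rw [trace_outer_re, normsum_restrict S x hx0]
        have : ∑ i : ↥S, ‖x (i : Fin n)‖ ^ 2 = ∑ i : ↥S, ‖w i‖ ^ 2 := by
          apply Finset.sum_congr rfl
          intro i _
          rw [← hxw]
        rw [this, hwnorm]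
      · rw [trace_mul_outer, quad_restrict C S x hx0, hxw, hwval, hMeq, hsup]
    · have hMeq : M = 0 := max_eq_left (not_lt.mp hpos)
      refine ⟨0, ⟨Matrix.PosSemidef.zero, ⟨0, Fin.elim0, fun i => i.elim0, by simp⟩, by simp⟩, ?_⟩
      simp [hMeq]
  · -- upper bound
    rintro t ⟨X, ⟨hpsd, ⟨m, v, hsupp, hXeq⟩, htr⟩, rfl⟩
    have htrX : X.trace.re = ∑ i, ∑ j, ‖v i j‖ ^ 2 := by
      rw [hXeq, Matrix.trace_sum, Complex.re_sum]
      exact Finset.sum_congr rfl fun i _ => trace_outer_re (v i)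
    have key : ∀ i, (star (v i) ⬝ᵥ (C *ᵥ (v i))).re ≤ M * ∑ j, ‖v i j‖ ^ 2 := by
      intro i
      set S : Finset (Fin n) := Finset.univ.filter fun j => v i j ≠ 0 with hS
      have hv0 : ∀ j ∉ S, v i j = 0 := by
        intro j hj
        simpa [hS] using hj
      rcases S.eq_empty_or_nonempty with hemp | hSne
      · have hvz : v i = 0 := by
          funext j
          exact hv0 j (by simp [hemp])
        rw [hvz]
        simp
      · haveI : Nonempty ↥S := ⟨⟨hSne.choose, hSne.choose_spec⟩⟩
        have h : (C.submatrix (Subtype.val : ↥S → Fin n)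
            (Subtype.val : ↥S → Fin n)).IsHermitian := hC.submatrix _
        have hcA : (⨆ j : ↥S, h.eigenvalues j) ∈ A := ⟨S, hSne, hsupp i, h, rfl⟩
        have hcM : (⨆ j : ↥S, h.eigenvalues j) ≤ M :=
          le_trans (le_csSup hbdd hcA) (le_max_right _ _)
        have hray := rayleigh_le h
          (fun j => le_ciSup (Set.Finite.bddAbove (Set.finite_range _)) j) (fun j : ↥S => v i j)
        rw [quad_restrict C S (v i) hv0]
        refine le_trans hray (le_trans (mul_le_mul_of_nonneg_right hcM ?_) ?_)
        · positivity
        · rw [normsum_restrict S (v i) hv0]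
    calc ((C * X).trace).re = ∑ i, (star (v i) ⬝ᵥ (C *ᵥ (v i))).re := by
          rw [hXeq, Finset.mul_sum, Matrix.trace_sum, Complex.re_sum]
          exact Finset.sum_congr rfl fun i _ => congrArg Complex.re (trace_mul_outer C (v i))
      _ ≤ ∑ i, M * ∑ j, ‖v i j‖ ^ 2 := Finset.sum_le_sum fun i _ => key i
      _ = M * ∑ i, ∑ j, ‖v i j‖ ^ 2 := (Finset.mul_sum _ _ _).symm
      _ ≤ M * 1 := by
          apply mul_le_mul_of_nonneg_left _ hM0
          rw [← htrX]
          exact htr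
      _ = M := mul_one M
end
end

section
/- Let n, k be integers with 2 ≤ k ≤ n, let G be a simple undirected graph on n vertices containing no clique of size k, and let C ∈ ℂ^{n×n} be its adjacency matrix. Then μ(k,C) := max{ Tr(C X) : X ∈ I_k } ≤ sqrt((k−1)^2 − 2 + 2/k). -/
open Matrix BigOperators Finset ComplexOrder

noncomputable section

namespace MSaux

variable {n : ℕ}

def aR (G : SimpleGraph (Fin n)) [DecidableRel G.Adj] : Fin n → Fin n → ℝ :=
  fun u v => if G.Adj u v then 1 else 0

def FF (G : SimpleGraph (Fin n)) [DecidableRel G.Adj] (y : Fin n → ℝ) : ℝ :=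
  ∑ u, ∑ v, aR G u v * (y u * y v)

variable (G : SimpleGraph (Fin n)) [DecidableRel G.Adj]

lemma aR_symm (u v : Fin n) : aR G u v = aR G v u := by
  simp [aR, G.adj_comm]

lemma aR_diag (u : Fin n) : aR G u u = 0 := by simp [aR]

lemma aR_nonneg (u v : Fin n) : 0 ≤ aR G u v := by
  unfold aR; split <;> norm_num

lemma FF_nonneg (y : Fin n → ℝ) (hy : ∀ i, 0 ≤ y i) : 0 ≤ FF G y := by
  refine Finset.sum_nonneg fun u _ => Finset.sum_nonneg fun v _ => ?_
  exact mul_nonneg (aR_nonneg G u v) (mul_nonneg (hy u) (hy v))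

lemma FF_expand (y d : Fin n → ℝ) :
    FF G (y + d) = FF G y + 2 * (∑ u, ∑ v, aR G u v * (y u * d v)) + FF G d := by
  have hswap : ∑ u, ∑ v, aR G u v * (d u * y v) = ∑ u, ∑ v, aR G u v * (y u * d v) := by
    rw [Finset.sum_comm]
    refine Finset.sum_congr rfl fun u _ => Finset.sum_congr rfl fun v _ => ?_
    rw [aR_symm]; ring
  have : FF G (y + d) = (∑ u, ∑ v, aR G u v * (y u * y v))
      + (∑ u, ∑ v, aR G u v * (y u * d v))
      + ((∑ u, ∑ v, aR G u v * (d u * y v)) + ∑ u, ∑ v, aR G u v * (d u * d v)) := by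
    unfold FF
    rw [← Finset.sum_add_distrib, ← Finset.sum_add_distrib, ← Finset.sum_add_distrib]
    refine Finset.sum_congr rfl fun u _ => ?_
    rw [← Finset.sum_add_distrib, ← Finset.sum_add_distrib, ← Finset.sum_add_distrib]
    refine Finset.sum_congr rfl fun v _ => ?_
    simp only [Pi.add_apply]; ring
  rw [this, hswap]; unfold FF; ring

lemma B_shift (y : Fin n → ℝ) (i j : Fin n) :
    (∑ u, ∑ v, aR G u v * (y u *
      (fun w => (if w = j then y i else 0) - (if w = i then y i else 0)) v))
    = y i * ((∑ u, aR G u j * y u) - (∑ u, aR G u i * y u)) := by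
  simp only [mul_sub, mul_ite, mul_zero, mul_one, Finset.sum_sub_distrib,
    Finset.sum_ite_eq', Finset.mem_univ, if_true]
  rw [Finset.mul_sum, Finset.mul_sum]
  congr 1 <;> exact Finset.sum_congr rfl fun u _ => by ring

lemma FF_shift_zero (y : Fin n → ℝ) (i j : Fin n) (hij : i ≠ j) (hadj : ¬ G.Adj i j) :
    FF G (fun w => (if w = j then y i else 0) - (if w = i then y i else 0)) = 0 := by
  unfold FF
  refine Finset.sum_eq_zero fun u _ => Finset.sum_eq_zero fun v _ => ?_
  by_cases hu : u = i ∨ u = j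
  · by_cases hv : v = i ∨ v = j
    · have hadj' : ¬ G.Adj j i := fun h => hadj h.symm
      have : aR G u v = 0 := by
        rcases hu with rfl | rfl <;> rcases hv with rfl | rfl <;>
          simp [aR, G.irrefl, hadj, hadj']
      rw [this, zero_mul]
    · push_neg at hv
      simp [hv.1, hv.2]
  · push_neg at hu
    simp [hu.1, hu.2]


lemma clique_case (k : ℕ) (hk : 2 ≤ k)
    (hcl : ¬∃ s : Finset (Fin n), G.IsNClique k s) (y : Fin n → ℝ) (hy : ∀ i, 0 ≤ y i)
    (hcliq : ∀ u, y u ≠ 0 → ∀ v, y v ≠ 0 → u ≠ v → G.Adj u v) :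
    FF G y ≤ (1 - 1/((k:ℝ)-1)) * (∑ i, y i)^2 := by
  classical
  set S : Finset (Fin n) := univ.filter (fun u => y u ≠ 0) with hS
  have hmemS : ∀ u, u ∈ S ↔ y u ≠ 0 := by intro u; simp [hS]
  -- card bound
  have hcard : S.card ≤ k - 1 := by
    by_contra h
    push_neg at h
    have hks : k ≤ S.card := by omega
    obtain ⟨t, hts, htc⟩ := Finset.exists_subset_card_eq hks
    refine hcl ⟨t, ⟨?_, htc⟩⟩
    intro u hu v hv huv
    exact hcliq u ((hmemS u).1 (hts hu)) v ((hmemS v).1 (hts hv)) huv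
  -- restrict sums to S
  have hFF : FF G y = ∑ u ∈ S, ∑ v ∈ S, aR G u v * (y u * y v) := by
    unfold FF
    rw [← Finset.sum_subset (Finset.subset_univ S) (fun u _ hu => ?_)]
    · refine Finset.sum_congr rfl fun u _ => ?_
      rw [← Finset.sum_subset (Finset.subset_univ S) (fun v _ hv => ?_)]
      have : y v = 0 := by by_contra h; exact hv ((hmemS v).2 h)
      simp [this]
    · have : y u = 0 := by by_contra h; exact hu ((hmemS u).2 h)
      simp [this]
  have hterm : ∀ u ∈ S, ∀ v ∈ S, aR G u v * (y u * y v)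
      = y u * y v - (if u = v then y u * y v else 0) := by
    intro u hu v hv
    by_cases huv : u = v
    · subst huv; simp [aR_diag G u]
    · have : G.Adj u v := hcliq u ((hmemS u).1 hu) v ((hmemS v).1 hv) huv
      simp [aR, this, huv]
  have hFF2 : FF G y = (∑ u ∈ S, y u)^2 - ∑ u ∈ S, (y u)^2 := by
    rw [hFF, Finset.sum_congr rfl (fun u hu => Finset.sum_congr rfl (hterm u hu))]
    rw [Finset.sum_congr rfl (fun u (hu : u ∈ S) => Finset.sum_sub_distrib _ _)]
    rw [Finset.sum_sub_distrib]
    congr 1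
    · rw [sq, Finset.sum_mul_sum]
    · refine Finset.sum_congr rfl fun u hu => ?_
      rw [Finset.sum_ite_eq S u (fun v => y u * y v), if_pos hu, sq]
  -- arithmetic finish
  have hsum_eq : ∑ i, y i = ∑ u ∈ S, y u := by
    rw [← Finset.sum_subset (Finset.subset_univ S) (fun u _ hu => ?_)]
    by_contra h; exact hu ((hmemS u).2 h)
  set t : ℝ := ∑ u ∈ S, y u with ht
  set Q : ℝ := ∑ u ∈ S, (y u)^2 with hQ
  have hQnonneg : 0 ≤ Q := Finset.sum_nonneg fun u _ => sq_nonneg _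
  have hCS : t^2 ≤ (S.card : ℝ) * Q := by
    have := sq_sum_le_card_mul_sum_sq (s := S) (f := y)
    exact_mod_cast this
  have hcR : (S.card : ℝ) ≤ (k : ℝ) - 1 := by
    have h' : S.card + 1 ≤ k := by omega
    have h'' := (Nat.cast_le (α := ℝ)).2 h'
    push_cast at h''; linarith
  have hc1 : (1:ℝ) ≤ (k:ℝ) - 1 := by
    have := (Nat.cast_le (α := ℝ)).2 hk; push_cast at this; linarith
  have hcpos : (0:ℝ) < (k:ℝ) - 1 := by linarith
  have hCS2 : t^2 ≤ ((k:ℝ)-1) * Q := hCS.trans (mul_le_mul_of_nonneg_right hcR hQnonneg)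
  have hdiv : t^2/((k:ℝ)-1) ≤ Q := (div_le_iff₀ hcpos).2 (by linarith)
  rw [hsum_eq, hFF2]
  have hx : (1 - 1/((k:ℝ)-1)) * t^2 = t^2 - t^2/((k:ℝ)-1) := by ring
  rw [hx]
  linarith

lemma shift_step (c : ℝ) (N : ℕ) (y : Fin n → ℝ) (i j : Fin n) (hij : i ≠ j)
    (hadj : ¬ G.Adj i j) (hyi : y i ≠ 0) (hyj : y j ≠ 0) (hy : ∀ u, 0 ≤ y u)
    (hSij : (∑ u, aR G u i * y u) ≤ (∑ u, aR G u j * y u))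
    (hcard : (univ.filter fun u => y u ≠ 0).card ≤ N + 1)
    (ih : ∀ z : Fin n → ℝ, (univ.filter fun u => z u ≠ 0).card ≤ N → (∀ u, 0 ≤ z u) →
      FF G z ≤ c * (∑ u, z u)^2) :
    FF G y ≤ c * (∑ u, y u)^2 := by
  classical
  set d : Fin n → ℝ := fun w => (if w = j then y i else 0) - (if w = i then y i else 0) with hd
  have hFFd : FF G d = 0 := FF_shift_zero G y i j hij hadj
  have hB := B_shift G y i j
  have hexp := FF_expand G y d
  have hyd_i : (y + d) i = 0 := by simp [hd, hij]
  have hyd_j : (y + d) j = y j + y i := by simp [hd, hij.symm]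
  have hyd_other : ∀ u, u ≠ i → u ≠ j → (y + d) u = y u := by
    intro u hui huj; simp [hd, hui, huj]
  have hFFle : FF G y ≤ FF G (y + d) := by
    rw [hexp, hFFd, hB]
    have h0 : 0 ≤ y i * ((∑ u, aR G u j * y u) - (∑ u, aR G u i * y u)) :=
      mul_nonneg (hy i) (by linarith)
    linarith
  have hsum : ∑ u, (y + d) u = ∑ u, y u := by
    simp only [Pi.add_apply]
    rw [Finset.sum_add_distrib]
    have : ∑ u, d u = 0 := by
      simp [hd, Finset.sum_sub_distrib, Finset.sum_ite_eq']
    rw [this, add_zero]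
  have hy' : ∀ u, 0 ≤ (y + d) u := by
    intro u
    by_cases hui : u = i
    · subst hui; rw [hyd_i]
    · by_cases huj : u = j
      · subst huj; rw [hyd_j]; have := hy i; have := hy u; linarith
      · rw [hyd_other u hui huj]; exact hy u
  have hcard' : (univ.filter fun u => (y + d) u ≠ 0).card ≤ N := by
    have hsub : (univ.filter fun u => (y + d) u ≠ 0)
        ⊆ (univ.filter fun u => y u ≠ 0).erase i := by
      intro u hu
      rw [Finset.mem_filter] at hu
      rw [Finset.mem_erase, Finset.mem_filter]
      have hui : u ≠ i := by rintro rfl; exact hu.2 hyd_i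
      refine ⟨hui, Finset.mem_univ u, ?_⟩
      by_cases huj : u = j
      · subst huj; exact hyj
      · rw [hyd_other u hui huj] at hu; exact hu.2
    have hi : i ∈ univ.filter fun u => y u ≠ 0 := by simp [hyi]
    have := Finset.card_le_card hsub
    rw [Finset.card_erase_of_mem hi] at this
    omega
  calc FF G y ≤ FF G (y + d) := hFFle
    _ ≤ c * (∑ u, (y + d) u)^2 := ih _ hcard' hy'
    _ = c * (∑ u, y u)^2 := by rw [hsum]

lemma ms_aux (k : ℕ) (hk : 2 ≤ k) (hcl : ¬∃ s : Finset (Fin n), G.IsNClique k s) :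
    ∀ N : ℕ, ∀ y : Fin n → ℝ, (univ.filter fun u => y u ≠ 0).card ≤ N → (∀ i, 0 ≤ y i) →
      FF G y ≤ (1 - 1/((k:ℝ)-1)) * (∑ i, y i)^2 := by
  intro N
  induction N with
  | zero =>
    intro y hcard hy
    have hzero : ∀ u, y u = 0 := by
      intro u; by_contra h
      have hu : u ∈ univ.filter fun u => y u ≠ 0 := by simp [h]
      have := Finset.card_pos.2 ⟨u, hu⟩; omega
    have h1 : FF G y = 0 := by
      unfold FF
      exact Finset.sum_eq_zero fun u _ => Finset.sum_eq_zero fun v _ => by simp [hzero]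
    have h2 : (∑ i, y i) = 0 := Finset.sum_eq_zero fun i _ => hzero i
    rw [h1, h2]; norm_num
  | succ N ih =>
    intro y hcard hy
    by_cases hcliq : ∀ u, y u ≠ 0 → ∀ v, y v ≠ 0 → u ≠ v → G.Adj u v
    · exact clique_case G k hk hcl y hy hcliq
    · push_neg at hcliq
      obtain ⟨i, hyi, j, hyj, hij, hadj⟩ := hcliq
      rcases le_total (∑ u, aR G u i * y u) (∑ u, aR G u j * y u) with h | h
      · exact shift_step G _ N y i j hij hadj hyi hyj hy h hcard ih
      · exact shift_step G _ N y j i hij.symm (fun hgadj => hadj hgadj.symm) hyj hyi hy h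
          hcard ih

lemma motzkinStraus (k : ℕ) (hk : 2 ≤ k)
    (hcl : ¬∃ s : Finset (Fin n), G.IsNClique k s) (y : Fin n → ℝ) (hy : ∀ i, 0 ≤ y i) :
    FF G y ≤ (1 - 1/((k:ℝ)-1)) * (∑ i, y i)^2 :=
  ms_aux G k hk hcl _ y le_rfl hy

lemma card_adj_pairs_le (k : ℕ) (hk : 2 ≤ k)
    (hcl : ¬∃ s : Finset (Fin n), G.IsNClique k s) (S : Finset (Fin n)) (hS : S.card ≤ k) :
    (((S ×ˢ S).filter fun p => G.Adj p.1 p.2).card : ℝ)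
      ≤ (k:ℝ) * (k:ℝ) - (k:ℝ) - 2 := by
  classical
  set s' := (S ×ˢ S).filter fun p => G.Adj p.1 p.2 with hs'
  have hsub0 : s' ⊆ S.offDiag := by
    intro p hp
    rw [Finset.mem_filter, Finset.mem_product] at hp
    exact Finset.mem_offDiag.2 ⟨hp.1.1, hp.1.2, hp.2.ne⟩
  have hkR : (2:ℝ) ≤ (k:ℝ) := by exact_mod_cast hk
  by_cases hcliq : ∀ u ∈ S, ∀ v ∈ S, u ≠ v → G.Adj u v
  · -- S is a clique, so S.card ≤ k - 1
    have hcard : S.card + 1 ≤ k := by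
      by_contra h
      push_neg at h
      have hks : k ≤ S.card := by omega
      obtain ⟨t, hts, htc⟩ := Finset.exists_subset_card_eq hks
      exact hcl ⟨t, ⟨fun u hu v hv huv => hcliq u (hts hu) v (hts hv) huv, htc⟩⟩
    have h1 : s'.card ≤ S.card * S.card - S.card := by
      have := Finset.card_le_card hsub0
      rwa [Finset.offDiag_card] at this
    have hcc : S.card ≤ S.card * S.card := by
      rcases Nat.eq_zero_or_pos S.card with h | h
      · simp [h]
      · exact Nat.le_mul_of_pos_left _ h
    have h2 : s'.card + S.card ≤ S.card * S.card := by omega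
    have h2R : (s'.card : ℝ) + S.card ≤ (S.card:ℝ) * S.card := by exact_mod_cast h2
    have hcR : (S.card : ℝ) + 1 ≤ (k:ℝ) := by exact_mod_cast hcard
    have hc0 : (0:ℝ) ≤ (S.card:ℝ) := Nat.cast_nonneg _
    nlinarith [mul_nonneg (sub_nonneg.2 (by linarith : (S.card:ℝ) ≤ (k:ℝ) - 1))
      (by linarith : (0:ℝ) ≤ (S.card:ℝ) + (k:ℝ) - 2)]
  · push_neg at hcliq
    obtain ⟨i, hiS, j, hjS, hij, hadj⟩ := hcliq
    have hmem1 : (i, j) ∈ S.offDiag := Finset.mem_offDiag.2 ⟨hiS, hjS, hij⟩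
    have hmem2 : (j, i) ∈ S.offDiag := Finset.mem_offDiag.2 ⟨hjS, hiS, hij.symm⟩
    have hne12 : ((j, i) : Fin n × Fin n) ≠ (i, j) := by
      intro h; rw [Prod.mk.injEq] at h; exact hij h.1.symm
    have hsub : s' ⊆ (S.offDiag.erase (i, j)).erase (j, i) := by
      intro p hp
      rw [Finset.mem_filter] at hp
      rw [Finset.mem_erase, Finset.mem_erase]
      refine ⟨?_, ?_, hsub0 (by rw [hs', Finset.mem_filter]; exact hp)⟩
      · rintro rfl; exact hadj hp.2.symm
      · rintro rfl; exact hadj hp.2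
    have hcard2 : s'.card ≤ S.offDiag.card - 2 := by
      have h := Finset.card_le_card hsub
      rw [Finset.card_erase_of_mem (Finset.mem_erase.2 ⟨hne12, hmem2⟩),
        Finset.card_erase_of_mem hmem1] at h
      omega
    have h2le : 2 ≤ S.offDiag.card := by
      have hsub2 : ({(i,j), (j,i)} : Finset (Fin n × Fin n)) ⊆ S.offDiag := by
        intro p hp
        rcases Finset.mem_insert.1 hp with rfl | hp
        · exact hmem1
        · rw [Finset.mem_singleton] at hp; subst hp; exact hmem2
      have := Finset.card_le_card hsub2
      rwa [Finset.card_insert_of_notMem (by simp [hne12.symm, hij]),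
        Finset.card_singleton] at this
    have hoff : S.offDiag.card = S.card * S.card - S.card := S.offDiag_card
    have h3 : s'.card + 2 + S.card ≤ S.card * S.card := by omega
    have h3R : (s'.card : ℝ) + 2 + S.card ≤ (S.card:ℝ) * S.card := by exact_mod_cast h3
    have hcR : (S.card : ℝ) ≤ (k:ℝ) := by exact_mod_cast hS
    have hc0 : (0:ℝ) ≤ (S.card:ℝ) := Nat.cast_nonneg _
    nlinarith [mul_nonneg (sub_nonneg.2 hcR) (by linarith : (0:ℝ) ≤ (S.card:ℝ) + (k:ℝ) - 1)]

set_option maxHeartbeats 1000000 in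
lemma vec_bound (k : ℕ) (hk : 2 ≤ k) (hcl : ¬∃ s : Finset (Fin n), G.IsNClique k s)
    (x : Fin n → ℝ) (hx : ∀ i, 0 ≤ x i)
    (hsupp : (univ.filter fun u => x u ≠ 0).card ≤ k) :
    FF G x ≤ Real.sqrt (((k:ℝ)-1)^2 - 2 + 2/(k:ℝ)) * (∑ i, (x i)^2) := by
  classical
  have hkR : (2:ℝ) ≤ (k:ℝ) := by exact_mod_cast hk
  set S : Finset (Fin n) := univ.filter fun u => x u ≠ 0 with hSdef
  set s' := (S ×ˢ S).filter fun p => G.Adj p.1 p.2 with hs'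
  -- Step 1 : FF G x = sum over s'
  have step1 : FF G x = ∑ p ∈ s', x p.1 * x p.2 := by
    unfold FF
    rw [← Finset.sum_product', Finset.univ_product_univ]
    rw [← Finset.sum_subset (Finset.subset_univ s') (fun p _ hp => ?_)]
    · refine Finset.sum_congr rfl fun p hp => ?_
      rw [hs', Finset.mem_filter] at hp
      simp [aR, hp.2]
    · rw [hs', Finset.mem_filter] at hp
      by_cases hadj : G.Adj p.1 p.2
      · have hnp : p ∉ S ×ˢ S := fun h => hp ⟨h, hadj⟩
        rw [Finset.mem_product] at hnp
        rcases not_and_or.1 hnp with h | h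
        · have hz : x p.1 = 0 := by simpa [hSdef] using h
          simp [hz]
        · have hz : x p.2 = 0 := by simpa [hSdef] using h
          simp [hz]
      · simp [aR, hadj]
  -- Step 2 : Cauchy-Schwarz
  have step2 : (∑ p ∈ s', x p.1 * x p.2)^2 ≤ (s'.card : ℝ) * ∑ p ∈ s', (x p.1 * x p.2)^2 :=
    sq_sum_le_card_mul_sum_sq
  -- Step 3
  have step3 : ∑ p ∈ s', (x p.1 * x p.2)^2 ≤ FF G (fun u => (x u)^2) := by
    unfold FF
    rw [← Finset.sum_product', Finset.univ_product_univ]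
    have heq : ∑ p ∈ s', (x p.1 * x p.2)^2
        = ∑ p ∈ s', aR G p.1 p.2 * ((x p.1)^2 * (x p.2)^2) := by
      refine Finset.sum_congr rfl fun p hp => ?_
      rw [hs', Finset.mem_filter] at hp
      simp [aR, hp.2]; ring
    rw [heq]
    refine Finset.sum_le_sum_of_subset_of_nonneg (Finset.subset_univ s') fun p _ _ => ?_
    exact mul_nonneg (aR_nonneg G p.1 p.2) (mul_nonneg (sq_nonneg _) (sq_nonneg _))
  -- Step 4 : Motzkin-Straus
  have step4 : FF G (fun u => (x u)^2) ≤ (1 - 1/((k:ℝ)-1)) * (∑ i, (x i)^2)^2 :=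
    motzkinStraus G k hk hcl _ (fun i => sq_nonneg _)
  -- Step 5 : edge count
  have step5 : (s'.card : ℝ) ≤ (k:ℝ) * (k:ℝ) - (k:ℝ) - 2 :=
    card_adj_pairs_le G k hk hcl S hsupp
  -- Combine
  set t : ℝ := ∑ i, (x i)^2 with htdef
  have ht0 : 0 ≤ t := Finset.sum_nonneg fun i _ => sq_nonneg _
  have hT0 : 0 ≤ FF G x := FF_nonneg G x hx
  have harg : 0 ≤ ((k:ℝ)-1)^2 - 2 + 2/(k:ℝ) := by
    have hkpos : (0:ℝ) < (k:ℝ) := by linarith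
    have heq : ((k:ℝ)-1)^2 - 2 + 2/(k:ℝ) = ((k:ℝ)-2) * ((k:ℝ)-1) * ((k:ℝ)+1) / (k:ℝ) := by
      field_simp; ring
    rw [heq]
    apply div_nonneg _ (le_of_lt hkpos)
    nlinarith
  set R : ℝ := Real.sqrt (((k:ℝ)-1)^2 - 2 + 2/(k:ℝ)) with hRdef
  have hR0 : 0 ≤ R := Real.sqrt_nonneg _
  have hR2 : R^2 = ((k:ℝ)-1)^2 - 2 + 2/(k:ℝ) := Real.sq_sqrt harg
  have hcoef0 : (0:ℝ) ≤ 1 - 1/((k:ℝ)-1) := by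
    have h1 : (1:ℝ) ≤ (k:ℝ) - 1 := by linarith
    have : 1/((k:ℝ)-1) ≤ 1 := by
      rw [div_le_one (by linarith)]; linarith
    linarith
  have key : ((k:ℝ) * (k:ℝ) - (k:ℝ) - 2) * (1 - 1/((k:ℝ)-1)) ≤ R^2 := by
    rw [hR2]
    have hk1 : (0:ℝ) < (k:ℝ) - 1 := by linarith
    have hk0 : (0:ℝ) < (k:ℝ) := by linarith
    have e0 : (0:ℝ) ≤ (k:ℝ)*(k:ℝ)-(k:ℝ)-2 := by nlinarith
    have e1 : 1 - 1/((k:ℝ)-1) ≤ ((k:ℝ)-1)/(k:ℝ) := by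
      have h1 : 1/(k:ℝ) ≤ 1/((k:ℝ)-1) := one_div_le_one_div_of_le hk1 (by linarith)
      have h2 : ((k:ℝ)-1)/(k:ℝ) = 1 - 1/(k:ℝ) := by
        rw [sub_div, div_self (ne_of_gt hk0)]
      linarith
    have e3 : ((k:ℝ)*(k:ℝ)-(k:ℝ)-2) * (((k:ℝ)-1)/(k:ℝ)) = ((k:ℝ)-1)^2-2+2/(k:ℝ) := by
      field_simp
      ring
    calc ((k:ℝ)*(k:ℝ)-(k:ℝ)-2) * (1-1/((k:ℝ)-1))
        ≤ ((k:ℝ)*(k:ℝ)-(k:ℝ)-2) * (((k:ℝ)-1)/(k:ℝ)) := mul_le_mul_of_nonneg_left e1 e0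
      _ = ((k:ℝ)-1)^2-2+2/(k:ℝ) := e3
  have hT2 : (FF G x)^2 ≤ R^2 * t^2 := by
    rw [step1]
    calc (∑ p ∈ s', x p.1 * x p.2)^2
        ≤ (s'.card : ℝ) * ∑ p ∈ s', (x p.1 * x p.2)^2 := step2
      _ ≤ (s'.card : ℝ) * ((1 - 1/((k:ℝ)-1)) * t^2) := by
          refine mul_le_mul_of_nonneg_left (step3.trans step4) (Nat.cast_nonneg _)
      _ ≤ ((k:ℝ) * (k:ℝ) - (k:ℝ) - 2) * ((1 - 1/((k:ℝ)-1)) * t^2) := by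
          refine mul_le_mul_of_nonneg_right step5 (mul_nonneg hcoef0 (by positivity))
      _ = (((k:ℝ) * (k:ℝ) - (k:ℝ) - 2) * (1 - 1/((k:ℝ)-1))) * t^2 := by ring
      _ ≤ R^2 * t^2 := mul_le_mul_of_nonneg_right key (by positivity)
  nlinarith [hT2, hT0, mul_nonneg hR0 ht0]


end MSaux

/-- If a graph on `n` vertices contains no `k`-clique, then `Tr(C X) ≤ sqrt((k-1)² - 2 + 2/k)`
for every `X ∈ I_k`, where `C` is the adjacency matrix. -/
theorem mu_le_of_no_clique (n k : ℕ) (hk : 2 ≤ k) (hkn : k ≤ n)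
    (G : SimpleGraph (Fin n)) [DecidableRel G.Adj]
    (hclique : ¬ ∃ s : Finset (Fin n), G.IsNClique k s) :
    ∀ X ∈ Ik n k, ((G.adjMatrix ℂ * X).trace).re ≤
      Real.sqrt (((k : ℝ) - 1) ^ 2 - 2 + 2 / (k : ℝ)) := by
  classical
  rintro X ⟨hpsd, ⟨m, v, hsuppv, hXeq⟩, htr⟩
  set R : ℝ := Real.sqrt (((k : ℝ) - 1) ^ 2 - 2 + 2 / (k : ℝ)) with hR
  have hR0 : 0 ≤ R := Real.sqrt_nonneg _
  -- re of trace of C * X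
  have hsplit : ((G.adjMatrix ℂ * X).trace).re
      = ∑ l, ((G.adjMatrix ℂ * vecMulVec (v l) (star (v l))).trace).re := by
    rw [hXeq, Finset.mul_sum, Matrix.trace_sum, Complex.re_sum]
  -- per-vector bound
  have hper : ∀ l, ((G.adjMatrix ℂ * vecMulVec (v l) (star (v l))).trace).re
      ≤ MSaux.FF G (fun u => ‖v l u‖) := by
    intro l
    have htr_eq : ((G.adjMatrix ℂ * vecMulVec (v l) (star (v l))).trace)
        = ∑ i, ∑ j, (G.adjMatrix ℂ) i j * (v l j * (starRingEnd ℂ) (v l i)) := by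
      simp [Matrix.trace, Matrix.mul_apply, Matrix.diag, Matrix.vecMulVec_apply,
        Pi.star_apply, RCLike.star_def]
    rw [htr_eq, Complex.re_sum]
    refine Finset.sum_le_sum fun i _ => ?_
    rw [Complex.re_sum]
    refine Finset.sum_le_sum fun j _ => ?_
    by_cases hadj : G.Adj i j
    · simp only [SimpleGraph.adjMatrix_apply, if_pos hadj, one_mul, MSaux.aR, if_pos hadj]
      calc (v l j * (starRingEnd ℂ) (v l i)).re
          ≤ ‖v l j * (starRingEnd ℂ) (v l i)‖ := Complex.re_le_norm _
        _ = ‖v l j‖ * ‖v l i‖ := by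
            rw [norm_mul, Complex.norm_conj]
        _ = ‖v l i‖ * ‖v l j‖ := mul_comm _ _
    · simp [SimpleGraph.adjMatrix_apply, hadj, MSaux.aR]
  -- apply vec_bound
  have hvb : ∀ l, MSaux.FF G (fun u => ‖v l u‖) ≤ R * (∑ u, ‖v l u‖^2) := by
    intro l
    refine MSaux.vec_bound G k hk hclique _ (fun i => norm_nonneg _) ?_
    have : (univ.filter fun u => ‖v l u‖ ≠ 0) = (univ.filter fun u => v l u ≠ 0) := by
      refine Finset.filter_congr fun u _ => ?_
      simp [norm_ne_zero_iff]
    rw [this]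
    exact hsuppv l
  -- trace of X
  have htrX : (X.trace).re = ∑ l, ∑ u, ‖v l u‖^2 := by
    rw [hXeq, Matrix.trace_sum, Complex.re_sum]
    refine Finset.sum_congr rfl fun l _ => ?_
    have : (vecMulVec (v l) (star (v l))).trace = ∑ u, v l u * (starRingEnd ℂ) (v l u) := by
      simp [Matrix.trace, Matrix.diag, Matrix.vecMulVec_apply, RCLike.star_def]
    rw [this, Complex.re_sum]
    refine Finset.sum_congr rfl fun u _ => ?_
    rw [Complex.mul_conj]
    simp [Complex.normSq_eq_norm_sq, sq]
  have htrX0 : 0 ≤ ∑ l, ∑ u, ‖v l u‖^2 :=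
    Finset.sum_nonneg fun l _ => Finset.sum_nonneg fun u _ => sq_nonneg _
  calc ((G.adjMatrix ℂ * X).trace).re
      = ∑ l, ((G.adjMatrix ℂ * vecMulVec (v l) (star (v l))).trace).re := hsplit
    _ ≤ ∑ l, R * (∑ u, ‖v l u‖^2) := Finset.sum_le_sum fun l _ => (hper l).trans (hvb l)
    _ = R * ∑ l, ∑ u, ‖v l u‖^2 := by rw [Finset.mul_sum]
    _ ≤ R * 1 := by
        refine mul_le_mul_of_nonneg_left ?_ hR0
        rw [← htrX]; exact htr
    _ = R := mul_one R
end
end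

section
/- Let n ≥ 2 and let G be a simple undirected graph on n vertices with adjacency matrix C ∈ ℂ^{n×n}. For every integer k with 2 ≤ k ≤ n, the graph G contains a clique of size k if and only if μ(k,C) := max{ Tr(C X) : X ∈ I_k } ≥ k − 1; moreover, if G contains no clique of size k then μ(k,C) ≤ k − 1 − 1/k. -/
open Matrix BigOperators Finset ComplexOrder

noncomputable section

namespace CliqueMu

variable {n : ℕ} (G : SimpleGraph (Fin n)) [DecidableRel G.Adj]

def e (a b : Fin n) : ℝ := if G.Adj a b then 1 else 0
lemma e_nonneg (a b : Fin n) : 0 ≤ e G a b := by unfold e; split <;> norm_num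
lemma e_le_one (a b : Fin n) : e G a b ≤ 1 := by unfold e; split <;> norm_num
lemma e_self (a : Fin n) : e G a a = 0 := by simp [e]

lemma posSemidef_vvstar (u : Fin n → ℂ) : (vecMulVec u (star u)).PosSemidef := by
  constructor
  · ext a b
    simp [conjTranspose_apply, vecMulVec_apply, mul_comm]
  · intro x
    have h : star x ⬝ᵥ (vecMulVec u (star u) *ᵥ x) = star (star u ⬝ᵥ x) * (star u ⬝ᵥ x) := by
      simp only [dotProduct, mulVec, vecMulVec_apply, Pi.star_apply, star_sum, star_mul']
      rw [Finset.sum_mul]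
      refine Finset.sum_congr rfl fun a _ => ?_
      rw [Finset.mul_sum, Finset.mul_sum]
      refine Finset.sum_congr rfl fun b _ => ?_
      simp only [star_star]
      ring
    exact (posSemidef_vecMulVec_self_star u).2 x

lemma trace_mul_eq (C X : Matrix (Fin n) (Fin n) ℂ) :
    (C * X).trace = ∑ a, ∑ b, C a b * X b a := by
  simp [Matrix.trace, Matrix.diag, Matrix.mul_apply]

lemma re_trace_mul_le (v : Fin n → ℂ) :
    ((G.adjMatrix ℂ * vecMulVec v (star v)).trace).re ≤
      ∑ a, ∑ b, e G a b * (‖v a‖ * ‖v b‖) := by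
  rw [trace_mul_eq, Complex.re_sum]
  refine Finset.sum_le_sum fun a _ => ?_
  rw [Complex.re_sum]
  refine Finset.sum_le_sum fun b _ => ?_
  simp only [SimpleGraph.adjMatrix_apply, vecMulVec_apply, Pi.star_apply, e]
  by_cases h : G.Adj a b
  · simp only [if_pos h, one_mul]
    calc (v b * star (v a)).re ≤ ‖v b * star (v a)‖ := Complex.re_le_norm _
      _ = ‖v a‖ * ‖v b‖ := by rw [norm_mul, norm_star]; ring
  · simp [h]

lemma trace_re_eq (m : ℕ) (v : Fin m → Fin n → ℂ) :
    (∑ i, vecMulVec (v i) (star (v i))).trace.re = ∑ i, ∑ a, ‖v i a‖ ^ 2 := by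
  rw [Matrix.trace_sum, Complex.re_sum]
  refine Finset.sum_congr rfl fun i _ => ?_
  rw [Matrix.trace, Complex.re_sum]
  refine Finset.sum_congr rfl fun a _ => ?_
  simp only [Matrix.diag_apply, vecMulVec_apply, Pi.star_apply]
  simp [RCLike.star_def, Complex.mul_conj, Complex.normSq_eq_norm_sq,
    ← Complex.ofReal_pow]

lemma pervec_n (u : Fin n → ℂ) :
    ∑ a, ∑ b, e G a b * (‖u a‖ * ‖u b‖) ≤ (n : ℝ) * ∑ a, ‖u a‖ ^ 2 := by
  have h1 : ∑ a, ∑ b, e G a b * (‖u a‖ * ‖u b‖) ≤ ∑ a, ∑ b, ‖u a‖ * ‖u b‖ := by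
    refine Finset.sum_le_sum fun a _ => Finset.sum_le_sum fun b _ => ?_
    have hwab : 0 ≤ ‖u a‖ * ‖u b‖ := mul_nonneg (norm_nonneg _) (norm_nonneg _)
    nlinarith [e_le_one G a b, e_nonneg G a b]
  have h2 : ∑ a, ∑ b, ‖u a‖ * ‖u b‖ = (∑ a, ‖u a‖) ^ 2 := by
    rw [sq, Finset.sum_mul_sum]
  have h3 : (∑ a, ‖u a‖) ^ 2 ≤ (n : ℝ) * ∑ a, ‖u a‖ ^ 2 := by
    have h := sq_sum_le_card_mul_sum_sq (s := (univ : Finset (Fin n)))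
      (f := fun a => ‖u a‖)
    simpa using h
  linarith

lemma ik_bound (k : ℕ) (κ : ℝ) (hκ0 : 0 ≤ κ)
    (hper : ∀ u : Fin n → ℂ, suppCard u ≤ k →
      ∑ a, ∑ b, e G a b * (‖u a‖ * ‖u b‖) ≤ κ * ∑ a, ‖u a‖ ^ 2)
    (X : Matrix (Fin n) (Fin n) ℂ) (hX : X ∈ Ik n k) :
    ((G.adjMatrix ℂ * X).trace).re ≤ κ := by
  obtain ⟨hpsd, ⟨m, v, hv, rfl⟩, htr⟩ := hX
  rw [Finset.mul_sum, Matrix.trace_sum, Complex.re_sum]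
  have h1 : ∑ i, ((G.adjMatrix ℂ * vecMulVec (v i) (star (v i))).trace).re
      ≤ ∑ i, κ * ∑ a, ‖v i a‖ ^ 2 :=
    Finset.sum_le_sum fun i _ => (re_trace_mul_le G (v i)).trans (hper (v i) (hv i))
  have h2 : ∑ i, κ * ∑ a, ‖v i a‖ ^ 2 = κ * ∑ i, ∑ a, ‖v i a‖ ^ 2 :=
    (Finset.mul_sum _ _ _).symm
  have h3 := trace_re_eq (n := n) m v
  have h4 : κ * ∑ i, ∑ a, ‖v i a‖ ^ 2 ≤ κ * 1 := by
    rw [← h3]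
    exact mul_le_mul_of_nonneg_left htr hκ0
  calc ∑ i, ((G.adjMatrix ℂ * vecMulVec (v i) (star (v i))).trace).re
      ≤ κ * ∑ i, ∑ a, ‖v i a‖ ^ 2 := h2 ▸ h1
    _ ≤ κ := by linarith

lemma clique_value (k : ℕ) (hk2 : 2 ≤ k) (s : Finset (Fin n)) (hs : G.IsNClique k s) :
    ∃ X ∈ Ik n k, ((k:ℝ) - 1) = ((G.adjMatrix ℂ * X).trace).re := by
  obtain ⟨hclique, hcard⟩ := hs
  have hk0 : (0:ℝ) < k := by
    have : (0:ℕ) < k := by omega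
    exact_mod_cast this
  set c : ℝ := Real.sqrt ((k:ℝ))⁻¹ with hc
  have hc0 : 0 < c := Real.sqrt_pos.mpr (by positivity)
  have hc2 : c * c = ((k:ℝ))⁻¹ := Real.mul_self_sqrt (by positivity)
  set u : Fin n → ℂ := fun i => if i ∈ s then (c:ℂ) else 0 with hu
  have hune : ∀ a, u a ≠ 0 ↔ a ∈ s := by
    intro a
    by_cases h : a ∈ s
    · simp [hu, h, Complex.ofReal_ne_zero, hc0.ne']
    · simp [hu, h]
  have hsupp : suppCard u = k := by
    unfold suppCard
    rw [← hcard]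
    congr 1
    ext a
    simp only [Finset.mem_filter, Finset.mem_univ, true_and]
    exact hune a
  have hXsum : vecMulVec u (star u) = ∑ i : Fin 1, vecMulVec u (star u) := by simp
  have hnorm : ∀ a, ‖u a‖ ^ 2 = if a ∈ s then c * c else 0 := by
    intro a
    by_cases h : a ∈ s <;> simp [hu, h, Complex.norm_real, abs_of_pos hc0, sq]
  have htr : (vecMulVec u (star u)).trace.re = 1 := by
    rw [hXsum, trace_re_eq]
    rw [Fin.sum_univ_one]
    rw [Finset.sum_congr rfl fun a _ => hnorm a]
    rw [Finset.sum_ite_mem, Finset.univ_inter, Finset.sum_const, hcard, nsmul_eq_mul, hc2]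
    field_simp
  refine ⟨vecMulVec u (star u),
    ⟨posSemidef_vvstar u, ⟨1, fun _ => u, fun _ => le_of_eq hsupp, hXsum⟩, le_of_eq htr⟩, ?_⟩
  -- value computation
  rw [trace_mul_eq, Complex.re_sum]
  have hterm : ∀ a b : Fin n, ((G.adjMatrix ℂ) a b * (vecMulVec u (star u)) b a).re
      = (if G.Adj a b then (1:ℝ) else 0) *
        ((if a ∈ s then c else 0) * (if b ∈ s then c else 0)) := by
    intro a b
    rw [SimpleGraph.adjMatrix_apply, vecMulVec_apply]
    simp only [hu, Pi.star_apply]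
    by_cases hadj : G.Adj a b <;> by_cases ha : a ∈ s <;> by_cases hb : b ∈ s <;>
      simp [hadj, ha, hb, ← Complex.ofReal_mul, mul_comm]
  have hre : ∀ a : Fin n, (∑ b, (G.adjMatrix ℂ) a b * (vecMulVec u (star u)) b a).re
      = ∑ b, (if G.Adj a b then (1:ℝ) else 0) *
        ((if a ∈ s then c else 0) * (if b ∈ s then c else 0)) := by
    intro a
    rw [Complex.re_sum]
    exact Finset.sum_congr rfl fun b _ => hterm a b
  rw [Finset.sum_congr rfl fun a _ => hre a]
  -- restrict to s × s
  have hout : ∀ a : Fin n, a ∉ s → ∑ b, (if G.Adj a b then (1:ℝ) else 0) *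
      ((if a ∈ s then c else 0) * (if b ∈ s then c else 0)) = 0 := by
    intro a ha
    refine Finset.sum_eq_zero fun b _ => ?_
    rw [if_neg ha]
    ring
  have hinner : ∀ a : Fin n, ∑ b, (if G.Adj a b then (1:ℝ) else 0) *
      ((if a ∈ s then c else 0) * (if b ∈ s then c else 0))
      = ∑ b ∈ s, (if G.Adj a b then (1:ℝ) else 0) *
      ((if a ∈ s then c else 0) * (if b ∈ s then c else 0)) := by
    intro a
    symm
    apply Finset.sum_subset (Finset.subset_univ s)
    intro b _ hb
    rw [if_neg hb]
    ring
  have hrestrict : ∑ a, ∑ b, (if G.Adj a b then (1:ℝ) else 0) *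
      ((if a ∈ s then c else 0) * (if b ∈ s then c else 0))
      = ∑ a ∈ s, ∑ b ∈ s, (if G.Adj a b then (1:ℝ) else 0) *
      ((if a ∈ s then c else 0) * (if b ∈ s then c else 0)) := by
    rw [Finset.sum_congr rfl fun a _ => hinner a]
    symm
    apply Finset.sum_subset (Finset.subset_univ s)
    intro a _ ha
    refine Finset.sum_eq_zero fun b _ => ?_
    rw [if_neg ha]
    ring
  rw [hrestrict]
  have hee : ∀ a ∈ s, ∀ b ∈ s, (if G.Adj a b then (1:ℝ) else 0) *
      ((if a ∈ s then c else 0) * (if b ∈ s then c else 0))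
      = c * c - (if a = b then c * c else 0) := by
    intro a ha b hb
    rw [if_pos ha, if_pos hb]
    rcases eq_or_ne a b with rfl | hab
    · simp [SimpleGraph.irrefl]
    · have hadj : G.Adj a b := hclique ha hb hab
      simp [hadj, hab]
  rw [Finset.sum_congr rfl fun a ha => Finset.sum_congr rfl fun b hb => hee a ha b hb]
  simp only [Finset.sum_sub_distrib]
  have hd1 : ∑ a ∈ s, ∑ b ∈ s, (c * c) = (k:ℝ) * ((k:ℝ) * (c * c)) := by
    rw [Finset.sum_const, Finset.sum_const, hcard]
    push_cast [nsmul_eq_mul]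
    ring
  have hd2 : ∑ a ∈ s, ∑ b ∈ s, (if a = b then c * c else 0) = (k:ℝ) * (c * c) := by
    rw [Finset.sum_congr rfl fun a (ha : a ∈ s) => by
      rw [Finset.sum_ite_eq s a (fun _ => c * c), if_pos ha]]
    rw [Finset.sum_const, hcard, nsmul_eq_mul]
  rw [hd1, hd2, hc2]
  field_simp


lemma algebra_key (K a b r W : ℝ) (hK : 2 ≤ K) (ha : 0 ≤ a) (hb : 0 ≤ b)
    (hr : 0 ≤ r) (hW : 0 ≤ W) (hr2 : r ^ 2 ≤ (K - 2) * W) :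
    (a + b + r) ^ 2 - (a ^ 2 + b ^ 2 + W) - 2 * a * b ≤
      (K - 1 - 1 / K) * (a ^ 2 + b ^ 2 + W) := by
  have hK0 : (0:ℝ) < K := by linarith
  have hform : K - 1 - 1 / K = (K ^ 2 - K - 1) / K := by field_simp
  rw [hform, div_mul_eq_mul_div, le_div_iff₀ hK0]
  rcases eq_or_lt_of_le hK with heq | hlt
  · subst heq
    have hr0 : r = 0 := by nlinarith [sq_nonneg r]
    subst hr0
    nlinarith [sq_nonneg (a - b), sq_nonneg (a + b)]
  · have h1 : 0 < K - 2 := by linarith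
    have h2 : 0 < K ^ 2 - K - 1 := by nlinarith [mul_pos h1 hK0]
    have hM : 0 < (K - 2) * (K ^ 2 - K - 1) := mul_pos h1 h2
    nlinarith [mul_pos hM (show (0:ℝ) < K - 2 by linarith),
      sq_nonneg ((K - 2) * (K ^ 2 - K - 1) * (a + b) - 2 * K * (K - 2) * r),
      sq_nonneg ((K - 2) * (K ^ 2 - K - 1) * (a - b)),
      mul_nonneg (mul_nonneg (show (0:ℝ) ≤ (K-2)*(K^2-K-1) by positivity)
        (show (0:ℝ) ≤ K^2 - 1 by nlinarith)) (sub_nonneg.mpr hr2),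
      mul_nonneg (mul_nonneg (show (0:ℝ) ≤ K - 2 by linarith)
        (show (0:ℝ) ≤ K^2 - K + 1 by nlinarith)) (sq_nonneg r)]

lemma pervec_real (k : ℕ) (hk2 : 2 ≤ k) (hno : ∀ s : Finset (Fin n), ¬ G.IsNClique k s)
    (w : Fin n → ℝ) (hw : ∀ a, 0 ≤ w a)
    (hsupp : (Finset.univ.filter fun a => w a ≠ 0).card ≤ k) :
    ∑ a, ∑ b, e G a b * (w a * w b) ≤ ((k : ℝ) - 1 - 1 / k) * ∑ a, w a ^ 2 := by
  set S := Finset.univ.filter fun a => w a ≠ 0 with hSdef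
  have hmemS : ∀ a, a ∈ S ↔ w a ≠ 0 := fun a => by simp [hSdef]
  have hkR : (2:ℝ) ≤ (k:ℝ) := by exact_mod_cast hk2
  have hκ : (0:ℝ) ≤ (k:ℝ) - 1 - 1/k := by
    have h1 : 1/(k:ℝ) ≤ 1 := by rw [div_le_one (by linarith)]; linarith
    linarith
  have hQS : ∑ a, w a ^ 2 = ∑ a ∈ S, w a ^ 2 := by
    symm; apply Finset.sum_subset (Finset.subset_univ S)
    intro a _ ha
    have hwa : w a = 0 := by by_contra h; exact ha ((hmemS a).2 h)
    simp [hwa]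
  have hQS0 : (0:ℝ) ≤ ∑ a ∈ S, w a ^ 2 := Finset.sum_nonneg fun a _ => sq_nonneg _
  have hsum : ∑ a, ∑ b, e G a b * (w a * w b) = ∑ a ∈ S, ∑ b ∈ S, e G a b * (w a * w b) := by
    have inner : ∀ a : Fin n, ∑ b, e G a b * (w a * w b) = ∑ b ∈ S, e G a b * (w a * w b) := by
      intro a; symm; apply Finset.sum_subset (Finset.subset_univ S)
      intro b _ hb
      have hwb : w b = 0 := by by_contra h; exact hb ((hmemS b).2 h)
      simp [hwb]
    calc ∑ a, ∑ b, e G a b * (w a * w b)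
        = ∑ a, ∑ b ∈ S, e G a b * (w a * w b) := Finset.sum_congr rfl fun a _ => inner a
      _ = ∑ a ∈ S, ∑ b ∈ S, e G a b * (w a * w b) := by
          symm; apply Finset.sum_subset (Finset.subset_univ S)
          intro a _ ha
          have hwa : w a = 0 := by by_contra h; exact ha ((hmemS a).2 h)
          simp [hwa]
  rw [hsum, hQS]
  rcases lt_or_eq_of_le hsupp with hcard | hcard
  · -- S.card < k : Cauchy-Schwarz suffices
    have hstep : ∑ a ∈ S, ∑ b ∈ S, e G a b * (w a * w b) ≤
        ∑ a ∈ S, ∑ b ∈ S, (w a * w b - if a = b then w a * w b else 0) := by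
      refine Finset.sum_le_sum fun a _ => Finset.sum_le_sum fun b _ => ?_
      rcases eq_or_ne a b with rfl | hab
      · simp [e_self]
      · rw [if_neg hab]
        have hwab : 0 ≤ w a * w b := mul_nonneg (hw a) (hw b)
        nlinarith [e_le_one G a b, e_nonneg G a b]
    have hsplit : ∑ a ∈ S, ∑ b ∈ S, (w a * w b - if a = b then w a * w b else 0)
        = (∑ a ∈ S, w a) ^ 2 - ∑ a ∈ S, w a ^ 2 := by
      simp only [Finset.sum_sub_distrib]
      rw [sq, Finset.sum_mul_sum]
      congr 1
      refine Finset.sum_congr rfl fun a ha => ?_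
      rw [Finset.sum_ite_eq S a, if_pos ha, sq]
    have hCS : (∑ a ∈ S, w a) ^ 2 ≤ (S.card : ℝ) * ∑ a ∈ S, w a ^ 2 :=
      sq_sum_le_card_mul_sum_sq
    have hcard' : (S.card : ℝ) ≤ (k : ℝ) - 1 := by
      have h1 : S.card + 1 ≤ k := hcard
      have h2 := (Nat.cast_le (α := ℝ)).2 h1
      push_cast at h2; linarith
    calc ∑ a ∈ S, ∑ b ∈ S, e G a b * (w a * w b)
        ≤ (∑ a ∈ S, w a) ^ 2 - ∑ a ∈ S, w a ^ 2 := hsplit ▸ hstep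
      _ ≤ ((k:ℝ) - 1) * (∑ a ∈ S, w a ^ 2) - ∑ a ∈ S, w a ^ 2 := by
          nlinarith [hCS, mul_le_mul_of_nonneg_right hcard' hQS0]
      _ ≤ ((k:ℝ) - 1 - 1/k) * ∑ a ∈ S, w a ^ 2 := by
          have h1 : 1/(k:ℝ) ≤ 1 := by rw [div_le_one (by linarith)]; linarith
          nlinarith [hQS0]
  · -- S.card = k : there is a missing edge
    have hnc := hno S
    rw [SimpleGraph.isNClique_iff] at hnc
    push_neg at hnc
    have hnclique : ¬ G.IsClique (S : Set (Fin n)) := fun h => hnc h hcard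
    rw [SimpleGraph.isClique_iff, Set.Pairwise] at hnclique
    push_neg at hnclique
    obtain ⟨p, hp, q, hq, hpq, hadj⟩ := hnclique
    rw [Finset.mem_coe] at hp hq
    have hadj' : ¬ G.Adj q p := fun h => hadj h.symm
    have hstep : ∑ a ∈ S, ∑ b ∈ S, e G a b * (w a * w b) ≤
        ∑ a ∈ S, ∑ b ∈ S, (w a * w b - (if a = b then w a * w b else 0)
          - (if a = p then w a else 0) * (if b = q then w b else 0)
          - (if a = q then w a else 0) * (if b = p then w b else 0)) := by
      refine Finset.sum_le_sum fun a _ => Finset.sum_le_sum fun b _ => ?_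
      have hE1 : e G a b ≤ 1 := e_le_one G a b
      have hE0 : 0 ≤ e G a b := e_nonneg G a b
      have hwab : 0 ≤ w a * w b := mul_nonneg (hw a) (hw b)
      rcases eq_or_ne a b with rfl | hab
      · rw [if_pos rfl, e_self, zero_mul]
        have hB : (if a = p then w a else 0) * (if a = q then w a else 0) = 0 := by
          split_ifs with h1 h2
          · exact absurd (h1.symm.trans h2) hpq
          all_goals simp
        have hC : (if a = q then w a else 0) * (if a = p then w a else 0) = 0 := by
          split_ifs with h1 h2
          · exact absurd (h2.symm.trans h1) hpq
          all_goals simp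
        rw [hB, hC]
        linarith
      · rw [if_neg hab]
        by_cases hap : a = p
        · by_cases hbq : b = q
          · have he : e G a b = 0 := by rw [hap, hbq]; simp [e, hadj]
            have haq : ¬ a = q := fun h => hpq (hap.symm.trans h)
            have hbp : ¬ b = p := fun h => hpq (h.symm.trans hbq)
            rw [he, if_pos hap, if_pos hbq, if_neg haq, if_neg hbp]
            nlinarith
          · have haq : ¬ a = q := fun h => hpq (hap.symm.trans h)
            rw [if_pos hap, if_neg hbq, if_neg haq]
            nlinarith
        · rw [if_neg hap]
          by_cases haq : a = q
          · by_cases hbp : b = p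
            · have he : e G a b = 0 := by rw [haq, hbp]; simp [e, hadj']
              rw [he, if_pos haq, if_pos hbp]
              nlinarith
            · rw [if_neg hbp]
              nlinarith
          · rw [if_neg haq]
            nlinarith
    have hdiag : ∑ a ∈ S, ∑ b ∈ S, (if a = b then w a * w b else 0) = ∑ a ∈ S, w a ^ 2 := by
      refine Finset.sum_congr rfl fun a ha => ?_
      rw [Finset.sum_ite_eq S a, if_pos ha, sq]
    have hpq1 : ∑ a ∈ S, ∑ b ∈ S,
        ((if a = p then w a else 0) * (if b = q then w b else 0)) = w p * w q := by
      rw [← Finset.sum_mul_sum, Finset.sum_ite_eq' S p w, Finset.sum_ite_eq' S q w,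
        if_pos hp, if_pos hq]
    have hpq2 : ∑ a ∈ S, ∑ b ∈ S,
        ((if a = q then w a else 0) * (if b = p then w b else 0)) = w q * w p := by
      rw [← Finset.sum_mul_sum, Finset.sum_ite_eq' S q w, Finset.sum_ite_eq' S p w,
        if_pos hq, if_pos hp]
    have hsplit : ∑ a ∈ S, ∑ b ∈ S, (w a * w b - (if a = b then w a * w b else 0)
          - (if a = p then w a else 0) * (if b = q then w b else 0)
          - (if a = q then w a else 0) * (if b = p then w b else 0))
        = (∑ a ∈ S, w a) ^ 2 - (∑ a ∈ S, w a ^ 2) - 2 * (w p * w q) := by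
      simp only [Finset.sum_sub_distrib]
      rw [sq, Finset.sum_mul_sum, hdiag, hpq1, hpq2]
      ring
    have hqp : q ∈ S.erase p := Finset.mem_erase.mpr ⟨Ne.symm hpq, hq⟩
    set T := (S.erase p).erase q with hT
    have hsumw : ∑ a ∈ S, w a = w p + (w q + ∑ a ∈ T, w a) := by
      rw [← Finset.add_sum_erase S w hp, ← Finset.add_sum_erase _ w hqp]
    have hsumw2 : ∑ a ∈ S, w a ^ 2 = w p ^ 2 + (w q ^ 2 + ∑ a ∈ T, w a ^ 2) := by
      rw [← Finset.add_sum_erase S _ hp, ← Finset.add_sum_erase _ _ hqp]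
    have hTcard : (T.card : ℝ) = (k : ℝ) - 2 := by
      have h1 : T.card = k - 2 := by
        rw [hT, Finset.card_erase_of_mem hqp, Finset.card_erase_of_mem hp, hcard]
        omega
      rw [h1, Nat.cast_sub hk2]; norm_num
    have hCS : (∑ a ∈ T, w a) ^ 2 ≤ ((k:ℝ) - 2) * ∑ a ∈ T, w a ^ 2 := by
      have h := sq_sum_le_card_mul_sum_sq (s := T) (f := w)
      rwa [hTcard] at h
    have halg := algebra_key (k:ℝ) (w p) (w q) (∑ a ∈ T, w a) (∑ a ∈ T, w a ^ 2)
      hkR (hw p) (hw q) (Finset.sum_nonneg fun a _ => hw a)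
      (Finset.sum_nonneg fun a _ => sq_nonneg _) hCS
    calc ∑ a ∈ S, ∑ b ∈ S, e G a b * (w a * w b)
        ≤ (∑ a ∈ S, w a) ^ 2 - (∑ a ∈ S, w a ^ 2) - 2 * (w p * w q) := hsplit ▸ hstep
      _ = (w p + w q + ∑ a ∈ T, w a) ^ 2
          - (w p ^ 2 + w q ^ 2 + ∑ a ∈ T, w a ^ 2) - 2 * w p * w q := by
          rw [hsumw, hsumw2]; ring
      _ ≤ ((k:ℝ) - 1 - 1/k) * (w p ^ 2 + w q ^ 2 + ∑ a ∈ T, w a ^ 2) := halg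
      _ = ((k:ℝ) - 1 - 1/k) * ∑ a ∈ S, w a ^ 2 := by rw [hsumw2]; ring

lemma pervec (k : ℕ) (hk2 : 2 ≤ k) (hno : ∀ s : Finset (Fin n), ¬ G.IsNClique k s)
    (u : Fin n → ℂ) (hu : suppCard u ≤ k) :
    ∑ a, ∑ b, e G a b * (‖u a‖ * ‖u b‖) ≤ ((k : ℝ) - 1 - 1 / k) * ∑ a, ‖u a‖ ^ 2 := by
  apply pervec_real G k hk2 hno (fun a => ‖u a‖) (fun a => norm_nonneg _)
  have hset : (Finset.univ.filter fun a => ‖u a‖ ≠ 0)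
      = Finset.univ.filter fun a => u a ≠ 0 := by
    ext a
    simp [norm_ne_zero_iff]
  rw [hset]
  exact hu

end CliqueMu

/-- A graph contains a `k`-clique iff `μ(k, C) ≥ k - 1`, where
`μ(k, C) = sup { Tr(C X) : X ∈ I_k }` and `C` is the adjacency matrix; moreover, if there
is no `k`-clique then `μ(k, C) ≤ k - 1 - 1/k`. -/

theorem clique_iff_mu_ge (n : ℕ) (hn : 2 ≤ n) (G : SimpleGraph (Fin n))
    [DecidableRel G.Adj] :
    ∀ k : ℕ, 2 ≤ k → k ≤ n →
      ((∃ s : Finset (Fin n), G.IsNClique k s) ↔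
        (k : ℝ) - 1 ≤ sSup {t : ℝ | ∃ X ∈ Ik n k, t = ((G.adjMatrix ℂ * X).trace).re}) ∧
      ((¬ ∃ s : Finset (Fin n), G.IsNClique k s) →
        sSup {t : ℝ | ∃ X ∈ Ik n k, t = ((G.adjMatrix ℂ * X).trace).re} ≤
          (k : ℝ) - 1 - 1 / (k : ℝ)) := by
  intro k hk2 hkn
  have hkR : (2:ℝ) ≤ (k:ℝ) := by exact_mod_cast hk2
  have hk0 : (0:ℝ) < k := by linarith
  have hκ0 : (0:ℝ) ≤ (k:ℝ) - 1 - 1/k := by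
    have h1 : 1/(k:ℝ) ≤ 1 := by rw [div_le_one hk0]; linarith
    linarith
  have hbdd : BddAbove {t : ℝ | ∃ X ∈ Ik n k, t = ((G.adjMatrix ℂ * X).trace).re} := by
    refine ⟨(n:ℝ), fun t ht => ?_⟩
    obtain ⟨X, hX, rfl⟩ := ht
    exact CliqueMu.ik_bound G k (n:ℝ) (by positivity)
      (fun u _ => CliqueMu.pervec_n G u) X hX
  have hno_bound : (¬ ∃ s : Finset (Fin n), G.IsNClique k s) →
      ∀ t ∈ {t : ℝ | ∃ X ∈ Ik n k, t = ((G.adjMatrix ℂ * X).trace).re},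
        t ≤ (k:ℝ) - 1 - 1/k := by
    intro hno t ht
    obtain ⟨X, hX, rfl⟩ := ht
    push_neg at hno
    exact CliqueMu.ik_bound G k _ hκ0 (fun u hu => CliqueMu.pervec G k hk2 hno u hu) X hX
  refine ⟨⟨?_, ?_⟩, ?_⟩
  · rintro ⟨s, hs⟩
    obtain ⟨X, hX, hval⟩ := CliqueMu.clique_value G k hk2 s hs
    exact le_csSup hbdd ⟨X, hX, hval⟩
  · intro hge
    by_contra hno
    have h1 := Real.sSup_le (hno_bound hno) hκ0
    have h2 : 0 < 1/(k:ℝ) := by positivity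
    linarith
  · intro hno
    exact Real.sSup_le (hno_bound hno) hκ0
end
end

section
/- Let n ≥ 2 and let M ∈ ℂ^{n×n} be Hermitian. If ‖M − I/n‖_F ≤ 1/n, then M is positive semidefinite and 2-incoherent (and hence k-incoherent for every k with 2 ≤ k ≤ n). -/
open Matrix BigOperators Finset ComplexOrder

noncomputable section

lemma quad_split (n : ℕ) (C : Matrix (Fin (n+1)) (Fin (n+1)) ℝ) (x0 : ℝ) (y : Fin n → ℝ) :
    ∑ i, ∑ j, C i j * (Fin.cases x0 y : ∀ _ : Fin (n+1), ℝ) i * (Fin.cases x0 y : ∀ _ : Fin (n+1), ℝ) j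
      = C 0 0 * x0 * x0 + (∑ j, C 0 j.succ * x0 * y j) +
        ((∑ i, C i.succ 0 * y i * x0) + ∑ i, ∑ j, C i.succ j.succ * y i * y j) := by
  rw [Fin.sum_univ_succ]
  simp only [Fin.cases_zero, Fin.cases_succ, Fin.sum_univ_succ, Finset.sum_add_distrib]

lemma stieltjes_scaling : ∀ (n : ℕ) (C : Matrix (Fin n) (Fin n) ℝ),
    (∀ i j, C i j = C j i) →
    (∀ x : Fin n → ℝ, 0 ≤ ∑ i, ∑ j, C i j * x i * x j) →
    (∀ i j, i ≠ j → C i j ≤ 0) →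
    ∃ u : Fin n → ℝ, (∀ i, 0 < u i) ∧ ∀ i, 0 ≤ ∑ j, C i j * u j := by
  intro n
  induction n with
  | zero =>
      intro C _ _ _
      exact ⟨fun _ => 1, fun i => i.elim0, fun i => i.elim0⟩
  | succ n ih =>
      intro C hsymm hpsd hoff
      have hc0 : 0 ≤ C 0 0 := by
        have := hpsd (Fin.cases 1 (fun _ => 0))
        rw [quad_split] at this
        simpa using this
      have hrow : ∀ (u0 : ℝ) (u' : Fin n → ℝ) (i : Fin (n+1)),
          ∑ j, C i j * (Fin.cases u0 u' : ∀ _ : Fin (n+1), ℝ) j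
            = C i 0 * u0 + ∑ j, C i j.succ * u' j := by
        intro u0 u' i
        rw [Fin.sum_univ_succ]
        simp
      rcases eq_or_lt_of_le hc0 with hc | hc
      · -- C 0 0 = 0 : first row vanishes
        have hb : ∀ j : Fin n, C 0 j.succ = 0 := by
          intro j
          have hle : C 0 j.succ ≤ 0 := hoff 0 j.succ (Fin.succ_ne_zero j).symm
          rcases eq_or_lt_of_le hle with h | h
          · exact h
          · exfalso
            have hQ : ∀ t : ℝ, 0 ≤ C 0 0 * t * t + C 0 j.succ * t +
                (C j.succ 0 * t + C j.succ j.succ) := by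
              intro t
              have h2 := hpsd (Fin.cases t (fun k => if k = j then 1 else 0))
              rw [quad_split] at h2
              simpa [mul_ite, ite_mul, mul_one, mul_zero, zero_mul,
                Finset.sum_ite_eq'] using h2
            have hBne : (-2 : ℝ) * C 0 j.succ ≠ 0 := ne_of_gt (by linarith)
            have h1 := hQ ((C j.succ j.succ + 1) / (-2 * C 0 j.succ))
            rw [hsymm j.succ 0] at h1
            have hkey : C 0 j.succ * ((C j.succ j.succ + 1) / (-2 * C 0 j.succ))
                = -(C j.succ j.succ + 1) / 2 := by
              rw [mul_div_assoc', div_eq_div_iff hBne two_ne_zero]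
              ring
            rw [← hc, hkey] at h1
            simp only [zero_mul, zero_add] at h1
            linarith
        obtain ⟨u', hu'pos, hu'⟩ := ih (Matrix.of fun i j => C i.succ j.succ)
          (fun i j => hsymm _ _)
          (by
            intro y
            have := hpsd (Fin.cases 0 y)
            rw [quad_split] at this
            simpa using this)
          (fun i j hij => hoff _ _ (fun h => hij (Fin.succ_injective _ h)))
        refine ⟨Fin.cases 1 u', ?_, ?_⟩
        · intro i
          refine Fin.cases ?_ ?_ i
          · simp
          · intro k; simpa using hu'pos k
        · intro i
          rw [hrow]
          refine Fin.cases ?_ ?_ i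
          · simp [hb, ← hc]
        
          · intro k
            have h0 : C k.succ 0 = 0 := by rw [hsymm]; exact hb k
            have := hu' k
            simpa [h0] using this
      · -- 0 < C 0 0 : Schur complement step
        have hc' : C 0 0 ≠ 0 := ne_of_gt hc
        set S : Matrix (Fin n) (Fin n) ℝ :=
          Matrix.of (fun i j => C i.succ j.succ - C 0 i.succ * C 0 j.succ / C 0 0) with hSdef
        have hSapp : ∀ i j, S i j
            = C i.succ j.succ - C 0 i.succ * C 0 j.succ / C 0 0 := fun i j => rfl
        have hSsymm : ∀ i j, S i j = S j i := by
          intro i j; rw [hSapp, hSapp, hsymm i.succ j.succ]; ring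
        have hcollect : ∀ y : Fin n → ℝ,
            ∑ i, ∑ j, S i j * y i * y j
              = (∑ i, ∑ j, C i.succ j.succ * y i * y j)
                - (∑ j, C 0 j.succ * y j) * (∑ j, C 0 j.succ * y j) / C 0 0 := by
          intro y
          rw [Finset.sum_mul_sum, Finset.sum_div, ← Finset.sum_sub_distrib]
          refine Finset.sum_congr rfl fun i _ => ?_
          rw [Finset.sum_div, ← Finset.sum_sub_distrib]
          refine Finset.sum_congr rfl fun j _ => ?_
          rw [hSapp]; ring
        have hSpsd : ∀ y : Fin n → ℝ, 0 ≤ ∑ i, ∑ j, S i j * y i * y j := by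
          intro y
          have hq := hpsd (Fin.cases (-(∑ j, C 0 j.succ * y j) / C 0 0) y)
          rw [quad_split] at hq
          have e2 : ∀ r : ℝ, ∑ j, C 0 j.succ * r * y j = (∑ j, C 0 j.succ * y j) * r := by
            intro r; rw [Finset.sum_mul]; exact Finset.sum_congr rfl fun j _ => by ring
          have e3 : ∀ r : ℝ, ∑ i, C i.succ 0 * y i * r = (∑ j, C 0 j.succ * y j) * r := by
            intro r; rw [Finset.sum_mul]; refine Finset.sum_congr rfl fun j _ => ?_
            rw [hsymm j.succ 0]
          rw [e2, e3] at hq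
          rw [hcollect y]
          rw [mul_comm (C 0 0) ((-∑ j, C 0 j.succ * y j) / C 0 0),
            div_mul_cancel₀ _ hc'] at hq
          have r1 : (-∑ j, C 0 j.succ * y j) * ((-∑ j, C 0 j.succ * y j) / C 0 0)
              + (∑ j, C 0 j.succ * y j) * ((-∑ j, C 0 j.succ * y j) / C 0 0) = 0 := by
            ring
          have r2 : (∑ j, C 0 j.succ * y j) * ((-∑ j, C 0 j.succ * y j) / C 0 0)
              = -(((∑ j, C 0 j.succ * y j) * ∑ j, C 0 j.succ * y j) / C 0 0) := by
            ring
          linarith [hq]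
        have hSoff : ∀ i j, i ≠ j → S i j ≤ 0 := by
          intro i j hij
          rw [hSapp]
          have h1 : C i.succ j.succ ≤ 0 := hoff _ _ fun h => hij (Fin.succ_injective _ h)
          have h2 : C 0 i.succ ≤ 0 := hoff _ _ (Fin.succ_ne_zero i).symm
          have h3 : C 0 j.succ ≤ 0 := hoff _ _ (Fin.succ_ne_zero j).symm
          have h4 : 0 ≤ C 0 i.succ * C 0 j.succ := by nlinarith
          have h5 : 0 ≤ C 0 i.succ * C 0 j.succ / C 0 0 := div_nonneg h4 hc.le
          linarith
        obtain ⟨u', hu'pos, hu'⟩ := ih S hSsymm hSpsd hSoff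
        have key : ∀ k, ∑ j, C k.succ j.succ * u' j
            = (∑ j, S k j * u' j)
              + C 0 k.succ * (∑ j, C 0 j.succ * u' j) / C 0 0 := by
          intro k
          rw [Finset.mul_sum, Finset.sum_div, ← Finset.sum_add_distrib]
          refine Finset.sum_congr rfl fun j _ => ?_
          rw [hSapp]; ring
        have hbnp : ∀ j : Fin n, C 0 j.succ ≤ 0 :=
          fun j => hoff 0 j.succ (Fin.succ_ne_zero j).symm
        have hγle : (∑ j, C 0 j.succ * u' j) ≤ 0 := Finset.sum_nonpos
          (fun j _ => mul_nonpos_of_nonpos_of_nonneg (hbnp j) (hu'pos j).le)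
        rcases lt_or_eq_of_le hγle with hlt | heq
        · refine ⟨Fin.cases ((-(∑ j, C 0 j.succ * u' j)) / C 0 0) u', ?_, ?_⟩
          · intro i
            refine Fin.cases ?_ ?_ i
            · exact div_pos (by linarith) hc
            · intro k; simpa using hu'pos k
          · intro i
            rw [hrow]
            refine Fin.cases ?_ ?_ i
            · rw [mul_comm (C 0 0) _, div_mul_cancel₀ _ hc']
              linarith
            · intro k
              rw [key k, hsymm k.succ 0]
              have hz : C 0 k.succ * (-(∑ j, C 0 j.succ * u' j) / C 0 0)
                  + C 0 k.succ * (∑ j, C 0 j.succ * u' j) / C 0 0 = 0 := by ring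
              linarith [hu' k, hz]
        · have hb0 : ∀ j : Fin n, C 0 j.succ = 0 := by
            intro j
            have hall := (Finset.sum_eq_zero_iff_of_nonpos
              (fun j (_ : j ∈ Finset.univ) =>
                mul_nonpos_of_nonpos_of_nonneg (hbnp j) (hu'pos j).le)).mp heq
            have := hall j (Finset.mem_univ j)
            exact (mul_eq_zero.mp this).resolve_right (ne_of_gt (hu'pos j))
          refine ⟨Fin.cases 1 u', ?_, ?_⟩
          · intro i
            refine Fin.cases ?_ ?_ i
            · simp
            · intro k; simpa using hu'pos k
          · intro i
            rw [hrow]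
            refine Fin.cases ?_ ?_ i
            · simp only [hb0, zero_mul, Finset.sum_const_zero, add_zero, mul_one]
              exact hc.le
            · intro k
              rw [key k, hsymm k.succ 0, hb0 k]
              simpa using hu' k

lemma suppCard_le_of_subset {n : ℕ} (w : Fin n → ℂ) (s : Finset (Fin n))
    (h : ∀ p, p ∉ s → w p = 0) : suppCard w ≤ s.card := by
  unfold suppCard
  refine Finset.card_le_card ?_
  intro p hp
  rw [Finset.mem_filter] at hp
  by_contra hns
  exact hp.2 (h p hns)

/-- A positive semidefinite rank-one matrix. -/
lemma posSemidef_vecMulVec_star {n : ℕ} (w : Fin n → ℂ) :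
    (vecMulVec w (star w)).PosSemidef := by
  rw [vecMulVec_eq Unit, ← conjTranspose_replicateCol]
  exact posSemidef_self_mul_conjTranspose _

set_option maxHeartbeats 1600000 in
/-- If a Hermitian matrix `M` satisfies `‖M - I/n‖_F ≤ 1/n`, then `M` is positive
semidefinite and `2`-incoherent (and hence `k`-incoherent for every `2 ≤ k ≤ n`). -/
theorem kIncoherent_of_close_to_scaled_id (n : ℕ) (hn : 2 ≤ n)
    (M : Matrix (Fin n) (Fin n) ℂ) (hM : M.IsHermitian)
    (hclose : frobNorm (M - ((n : ℂ))⁻¹ • (1 : Matrix (Fin n) (Fin n) ℂ)) ≤ 1 / (n : ℝ)) :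
    M.PosSemidef ∧ KIncoherent 2 M ∧ ∀ k : ℕ, 2 ≤ k → k ≤ n → KIncoherent k M := by
  have hn0 : (0:ℝ) < n := by
    have : (0:ℕ) < n := lt_of_lt_of_le (by norm_num) hn
    exact_mod_cast this
  set A := M - ((n : ℂ))⁻¹ • (1 : Matrix (Fin n) (Fin n) ℂ) with hAdef
  -- squared Frobenius bound
  have hS2 : ∑ i, ∑ j, ‖A i j‖ ^ 2 ≤ 1 / (n:ℝ)^2 := by
    have h0 : 0 ≤ ∑ i, ∑ j, ‖A i j‖ ^ 2 := by positivity
    have h1 : Real.sqrt (∑ i, ∑ j, ‖A i j‖ ^ 2) ≤ 1 / n := hclose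
    have h2 : Real.sqrt (∑ i, ∑ j, ‖A i j‖ ^ 2) ^ 2 ≤ (1 / (n:ℝ)) ^ 2 :=
      pow_le_pow_left₀ (Real.sqrt_nonneg _) h1 2
    rw [Real.sq_sqrt h0] at h2
    calc ∑ i, ∑ j, ‖A i j‖ ^ 2 ≤ (1 / (n:ℝ)) ^ 2 := h2
      _ = 1 / (n:ℝ) ^ 2 := by ring
  have hAdiag : ∀ i, (A i i).re = (M i i).re - (n:ℝ)⁻¹ := by
    intro i
    have hcast : ((n:ℂ))⁻¹ = (((n:ℝ))⁻¹ : ℂ) := by push_cast; ring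
    simp [hAdef, Matrix.sub_apply, Matrix.smul_apply, Matrix.one_apply_eq, hcast,
      Complex.sub_re, Complex.ofReal_re]
  have hAoff : ∀ i j, i ≠ j → A i j = M i j := by
    intro i j h
    simp [hAdef, Matrix.sub_apply, Matrix.smul_apply, Matrix.one_apply_ne h]
  -- the comparison matrix
  set Cmp : Matrix (Fin n) (Fin n) ℝ :=
    Matrix.of (fun i j => if i = j then (M i i).re else -‖M i j‖) with hCdef
  have hCapp : ∀ i j, Cmp i j = if i = j then (M i i).re else -‖M i j‖ := fun i j => rfl
  have hMsymm : ∀ i j, ‖M i j‖ = ‖M j i‖ := by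
    intro i j
    rw [← hM.apply i j, norm_star]
  have hCsymm : ∀ i j, Cmp i j = Cmp j i := by
    intro i j
    by_cases h : i = j
    · rw [h]
    · have h' : ¬ j = i := fun hh => h hh.symm
      rw [hCapp, hCapp, if_neg h, if_neg h', hMsymm]
  have hCoff : ∀ i j, i ≠ j → Cmp i j ≤ 0 := by
    intro i j h
    rw [hCapp, if_neg h]
    exact neg_nonpos.mpr (norm_nonneg _)
  have hCquad : ∀ x : Fin n → ℝ, 0 ≤ ∑ i, ∑ j, Cmp i j * x i * x j := by
    intro x
    have hterm : ∀ i j, (if i = j then x i ^ 2 * (n:ℝ)⁻¹ else 0) - ‖A i j‖ * (|x i| * |x j|)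
        ≤ Cmp i j * x i * x j := by
      intro i j
      by_cases h : i = j
      · subst h
        have h1 : -‖A i i‖ ≤ (A i i).re := by
          have h2 := Complex.abs_re_le_norm (A i i)
          have := neg_abs_le ((A i i).re)
          linarith
        have h2 : Cmp i i = (n:ℝ)⁻¹ + (A i i).re := by
          rw [hCapp, if_pos rfl, hAdiag i]; ring
        rw [h2, if_pos rfl]
        have h3 : |x i| * |x i| = x i ^ 2 := by rw [abs_mul_abs_self]; ring
        rw [h3]
        nlinarith [sq_nonneg (x i)]
      · have h2 : Cmp i j = -‖A i j‖ := by rw [hCapp, if_neg h, hAoff i j h]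
        rw [h2, if_neg h]
        have h3 : x i * x j ≤ |x i| * |x j| := by rw [← abs_mul]; exact le_abs_self _
        have h4 : 0 ≤ ‖A i j‖ := norm_nonneg _
        nlinarith
    have hsum1 : ∑ i, ∑ j, ((if i = j then x i ^ 2 * (n:ℝ)⁻¹ else 0) - ‖A i j‖ * (|x i| * |x j|))
        ≤ ∑ i, ∑ j, Cmp i j * x i * x j :=
      Finset.sum_le_sum fun i _ => Finset.sum_le_sum fun j _ => hterm i j
    have hdiag : ∑ i, ∑ j, (if i = j then x i ^ 2 * (n:ℝ)⁻¹ else 0)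
        = (∑ i, x i ^ 2) * (n:ℝ)⁻¹ := by
      rw [Finset.sum_mul]
      refine Finset.sum_congr rfl fun i _ => ?_
      rw [Finset.sum_ite_eq]
      simp
    have hCS : ∑ i, ∑ j, ‖A i j‖ * (|x i| * |x j|) ≤ (n:ℝ)⁻¹ * (∑ i, x i ^ 2) := by
      have hp := Finset.sum_mul_sq_le_sq_mul_sq Finset.univ
        (fun p : Fin n × Fin n => ‖A p.1 p.2‖) (fun p => |x p.1| * |x p.2|)
      have hg : ∑ p : Fin n × Fin n, (|x p.1| * |x p.2|) ^ 2 = (∑ i, x i ^ 2) ^ 2 := by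
        rw [Fintype.sum_prod_type, sq, Finset.sum_mul_sum]
        refine Finset.sum_congr rfl fun i _ => Finset.sum_congr rfl fun j _ => ?_
        rw [mul_pow, sq_abs, sq_abs]
      have hf : ∑ p : Fin n × Fin n, ‖A p.1 p.2‖ ^ 2 = ∑ i, ∑ j, ‖A i j‖ ^ 2 :=
        Fintype.sum_prod_type fun p : Fin n × Fin n => ‖A p.1 p.2‖ ^ 2
      have hrw : ∑ i, ∑ j, ‖A i j‖ * (|x i| * |x j|)
          = ∑ p : Fin n × Fin n, ‖A p.1 p.2‖ * (|x p.1| * |x p.2|) :=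
        (Fintype.sum_prod_type fun p : Fin n × Fin n => ‖A p.1 p.2‖ * (|x p.1| * |x p.2|)).symm
      rw [hrw]
      have hs0 : 0 ≤ ∑ p : Fin n × Fin n, ‖A p.1 p.2‖ * (|x p.1| * |x p.2|) :=
        Finset.sum_nonneg fun p _ => mul_nonneg (norm_nonneg _)
          (mul_nonneg (abs_nonneg _) (abs_nonneg _))
      have hT0 : 0 ≤ ∑ i, x i ^ 2 := Finset.sum_nonneg fun i _ => sq_nonneg _
      rw [hg, hf] at hp
      have hle : (∑ p : Fin n × Fin n, ‖A p.1 p.2‖ * (|x p.1| * |x p.2|)) ^ 2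
          ≤ ((n:ℝ)⁻¹ * (∑ i, x i ^ 2)) ^ 2 := by
        have h1 : (1 / (n:ℝ)^2) * (∑ i, x i ^ 2) ^ 2 = ((n:ℝ)⁻¹ * (∑ i, x i ^ 2)) ^ 2 := by
          field_simp
        have h2 : (∑ i, ∑ j, ‖A i j‖ ^ 2) * (∑ i, x i ^ 2) ^ 2
            ≤ (1 / (n:ℝ)^2) * (∑ i, x i ^ 2) ^ 2 :=
          mul_le_mul_of_nonneg_right hS2 (sq_nonneg _)
        calc (∑ p : Fin n × Fin n, ‖A p.1 p.2‖ * (|x p.1| * |x p.2|)) ^ 2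
            ≤ (∑ i, ∑ j, ‖A i j‖ ^ 2) * (∑ i, x i ^ 2) ^ 2 := hp
          _ ≤ (1 / (n:ℝ)^2) * (∑ i, x i ^ 2) ^ 2 := h2
          _ = ((n:ℝ)⁻¹ * (∑ i, x i ^ 2)) ^ 2 := h1
      have hc0 : 0 ≤ (n:ℝ)⁻¹ * (∑ i, x i ^ 2) := by positivity
      nlinarith [hle, hs0, hc0]
    have hsplit : ∑ i, ∑ j, ((if i = j then x i ^ 2 * (n:ℝ)⁻¹ else 0) - ‖A i j‖ * (|x i| * |x j|))
        = (∑ i, x i ^ 2) * (n:ℝ)⁻¹ - ∑ i, ∑ j, ‖A i j‖ * (|x i| * |x j|) := by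
      rw [← hdiag, ← Finset.sum_sub_distrib]
      exact Finset.sum_congr rfl fun i _ => Finset.sum_sub_distrib _ _
    rw [hsplit] at hsum1
    linarith [hsum1, hCS]
  obtain ⟨u, hupos, hu⟩ := stieltjes_scaling n Cmp hCsymm hCquad hCoff
  -- the off-diagonal weights and diagonal remainders
  set aa : Fin n → Fin n → ℝ := fun i j => ‖M i j‖ * u j / u i with haadef
  have haa : ∀ i j, aa i j = ‖M i j‖ * u j / u i := fun i j => rfl
  have haann : ∀ i j, 0 ≤ aa i j := fun i j =>
    div_nonneg (mul_nonneg (norm_nonneg _) (hupos j).le) (hupos i).le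
  set d : Fin n → ℝ := fun i => (M i i).re - ∑ j ∈ Finset.univ.erase i, aa i j with hddef
  have hdd : ∀ i, d i = (M i i).re - ∑ j ∈ Finset.univ.erase i, aa i j := fun i => rfl
  have hd : ∀ i, 0 ≤ d i := by
    intro i
    have h := hu i
    rw [← Finset.add_sum_erase _ _ (Finset.mem_univ i)] at h
    have h2 : Cmp i i = (M i i).re := by rw [hCapp, if_pos rfl]
    have h3 : ∑ j ∈ Finset.univ.erase i, Cmp i j * u j
        = -∑ j ∈ Finset.univ.erase i, ‖M i j‖ * u j := by
      rw [← Finset.sum_neg_distrib]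
      refine Finset.sum_congr rfl fun j hj => ?_
      have hij : i ≠ j := fun hh => (Finset.mem_erase.mp hj).1 hh.symm
      rw [hCapp, if_neg hij]; ring
    rw [h2, h3] at h
    have h4 : ∑ j ∈ Finset.univ.erase i, aa i j
        = (∑ j ∈ Finset.univ.erase i, ‖M i j‖ * u j) / u i := by
      rw [Finset.sum_div]
    rw [hdd, h4, sub_nonneg, div_le_iff₀ (hupos i)]
    linarith
  -- the two families of vectors
  set W1 : Fin n → Fin n → ℂ :=
    fun i p => if p = i then ((Real.sqrt (d i) : ℝ) : ℂ) else 0 with hW1def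
  set W2 : Fin n → Fin n → Fin n → ℂ :=
    fun i j p => if i < j then
        (if p = i then ((Real.sqrt (aa i j) : ℝ) : ℂ)
         else if p = j then (starRingEnd ℂ) (M i j) / ((Real.sqrt (aa i j) : ℝ) : ℂ) else 0)
      else 0 with hW2def
  have hW1app : ∀ i p, W1 i p = if p = i then ((Real.sqrt (d i) : ℝ) : ℂ) else 0 :=
    fun i p => rfl
  have hW2app : ∀ i j p, W2 i j p = if i < j then
        (if p = i then ((Real.sqrt (aa i j) : ℝ) : ℂ)
         else if p = j then (starRingEnd ℂ) (M i j) / ((Real.sqrt (aa i j) : ℝ) : ℂ) else 0)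
      else 0 := fun i j p => rfl
  -- the decomposition over the sum type
  have hMain : M = (∑ i, vecMulVec (W1 i) (star (W1 i)))
      + ∑ i, ∑ j, vecMulVec (W2 i j) (star (W2 i j)) := by
    apply Matrix.ext
    intro p q
    rw [Matrix.add_apply, Matrix.sum_apply, Matrix.sum_apply]
    simp only [Matrix.sum_apply, vecMulVec_apply, Pi.star_apply]
    by_cases hpq : p = q
    · subst hpq
      -- diagonal entry
      have e1 : ∑ i, W1 i p * star (W1 i p) = ((d p : ℝ) : ℂ) := by
        rw [Finset.sum_eq_single p
          (fun i _ hi => by rw [hW1app, if_neg (fun hh => hi hh.symm)]; simp)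
          (fun h => absurd (Finset.mem_univ p) h)]
        rw [hW1app, if_pos rfl]
        rw [Complex.star_def, Complex.conj_ofReal, ← Complex.ofReal_mul,
          Real.mul_self_sqrt (hd p)]
      have e2 : ∀ i j, W2 i j p * star (W2 i j p)
          = (if i = p ∧ p < j then ((aa p j : ℝ) : ℂ) else 0)
            + (if j = p ∧ i < p then ((aa p i : ℝ) : ℂ) else 0) := by
        intro i j
        by_cases hij : i < j
        · by_cases h1 : i = p
          · subst h1
            have c2 : ¬(j = i ∧ i < i) := fun h => lt_irrefl i h.2
            rw [hW2app, if_pos hij, if_pos rfl, if_pos ⟨rfl, hij⟩, if_neg c2]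
            rw [Complex.star_def, Complex.conj_ofReal, ← Complex.ofReal_mul,
              Real.mul_self_sqrt (haann i j), add_zero]
          · by_cases h2 : j = p
            · subst h2
              have hp1 : ¬ j = i := fun hh => h1 hh.symm
              have c1 : ¬(i = j ∧ j < j) := fun h => lt_irrefl j h.2
              rw [hW2app, if_pos hij, if_neg hp1, if_pos rfl, if_neg c1, if_pos ⟨rfl, hij⟩,
                zero_add]
              by_cases hM0 : M i j = 0
              · have : aa j i = 0 := by
                  rw [haa, ← hM.apply j i, hM0, star_zero, norm_zero, zero_mul, zero_div]
                rw [this, hM0]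
                simp
              · have hpos : 0 < aa i j :=
                  div_pos (mul_pos (norm_pos_iff.mpr hM0) (hupos j)) (hupos i)
                have hsne : ((Real.sqrt (aa i j) : ℝ) : ℂ) ≠ 0 :=
                  Complex.ofReal_ne_zero.mpr (Real.sqrt_ne_zero'.mpr hpos)
                rw [Complex.star_def, map_div₀, Complex.conj_conj, Complex.conj_ofReal]
                rw [div_mul_div_comm, ← Complex.ofReal_mul,
                  Real.mul_self_sqrt (haann i j)]
                rw [← Complex.normSq_eq_conj_mul_self]
                rw [← Complex.ofReal_div]
                congr 1
                have hnM : ‖M i j‖ ≠ 0 := norm_ne_zero_iff.mpr hM0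
                rw [Complex.normSq_eq_norm_sq]
                rw [haa, haa, ← hMsymm i j]
                rw [div_div_eq_mul_div, sq, mul_assoc]
                exact mul_div_mul_left _ _ hnM
            · have hp1 : ¬ p = i := fun hh => h1 hh.symm
              have hp2 : ¬ p = j := fun hh => h2 hh.symm
              have c1 : ¬(i = p ∧ p < j) := fun h => h1 h.1
              have c2 : ¬(j = p ∧ i < p) := fun h => h2 h.1
              rw [hW2app, if_pos hij, if_neg hp1, if_neg hp2, if_neg c1, if_neg c2]
              simp
        · have c1 : ¬(i = p ∧ p < j) := fun h => hij (by rw [h.1]; exact h.2)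
          have c2 : ¬(j = p ∧ i < p) := fun h => hij (by rw [h.1]; exact h.2)
          rw [hW2app, if_neg hij, if_neg c1, if_neg c2]
          simp
      have ea : ∑ i, ∑ j, (if i = p ∧ p < j then ((aa p j : ℝ) : ℂ) else 0)
          = ∑ j ∈ Finset.univ.filter (fun j => p < j), ((aa p j : ℝ) : ℂ) := by
        rw [Finset.sum_eq_single p
          (fun i _ hi => Finset.sum_eq_zero fun j _ => if_neg fun h => hi h.1)
          (fun h => absurd (Finset.mem_univ p) h)]
        rw [Finset.sum_filter]
        refine Finset.sum_congr rfl fun j _ => ?_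
        by_cases h : p < j <;> simp [h]
      have eb : ∑ i, ∑ j, (if j = p ∧ i < p then ((aa p i : ℝ) : ℂ) else 0)
          = ∑ i ∈ Finset.univ.filter (fun i => i < p), ((aa p i : ℝ) : ℂ) := by
        have hh : ∀ i : Fin n, ∑ j, (if j = p ∧ i < p then ((aa p i : ℝ) : ℂ) else 0)
            = if i < p then ((aa p i : ℝ) : ℂ) else 0 := by
          intro i
          rw [Finset.sum_eq_single p (fun j _ hj => if_neg fun h => hj h.1)
            (fun h => absurd (Finset.mem_univ p) h)]
          by_cases h : i < p <;> simp [h]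
        rw [Finset.sum_congr rfl fun i _ => hh i, Finset.sum_filter]
      have e3 : ∑ i, ∑ j, (W2 i j p * star (W2 i j p))
          = (∑ j ∈ Finset.univ.filter (fun j => p < j), ((aa p j : ℝ) : ℂ))
            + ∑ i ∈ Finset.univ.filter (fun i => i < p), ((aa p i : ℝ) : ℂ) := by
        calc ∑ i, ∑ j, (W2 i j p * star (W2 i j p))
            = ∑ i, ∑ j, ((if i = p ∧ p < j then ((aa p j : ℝ) : ℂ) else 0)
                + (if j = p ∧ i < p then ((aa p i : ℝ) : ℂ) else 0)) :=
              Finset.sum_congr rfl fun i _ => Finset.sum_congr rfl fun j _ => e2 i j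
          _ = (∑ i, ∑ j, (if i = p ∧ p < j then ((aa p j : ℝ) : ℂ) else 0))
                + ∑ i, ∑ j, (if j = p ∧ i < p then ((aa p i : ℝ) : ℂ) else 0) := by
              rw [← Finset.sum_add_distrib]
              exact Finset.sum_congr rfl fun i _ => Finset.sum_add_distrib
          _ = _ := by rw [ea, eb]
      rw [e1, e3]
      -- now a real computation
      have hconj : (starRingEnd ℂ) (M p p) = M p p := hM.apply p p
      have hre : ((M p p).re : ℂ) = M p p := Complex.conj_eq_iff_re.mp hconj
      rw [← hre, ← Complex.ofReal_sum, ← Complex.ofReal_sum, ← Complex.ofReal_add,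
        ← Complex.ofReal_add]
      congr 1
      have hsplitset : Finset.univ.erase p
          = Finset.univ.filter (fun j => p < j) ∪ Finset.univ.filter (fun j => j < p) := by
        ext j
        simp only [Finset.mem_erase, Finset.mem_univ, and_true, Finset.mem_union,
          Finset.mem_filter, true_and]
        constructor
        · intro h; exact (lt_or_gt_of_ne h).symm
        · rintro (h | h)
          · exact ne_of_gt h
          · exact ne_of_lt h
      have hdisj : Disjoint (Finset.univ.filter (fun j => p < j))
          (Finset.univ.filter (fun j => j < p)) := by
        rw [Finset.disjoint_left]
        intro x hx hx'
        simp only [Finset.mem_filter] at hx hx'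
        exact lt_asymm hx.2 hx'.2
      have hsum2 : ∑ j ∈ Finset.univ.erase p, aa p j
          = (∑ j ∈ Finset.univ.filter (fun j => p < j), aa p j)
            + ∑ j ∈ Finset.univ.filter (fun j => j < p), aa p j := by
        rw [hsplitset, Finset.sum_union hdisj]
      rw [hdd]
      linarith [hsum2]
    · -- off-diagonal entry
      have e1 : ∑ i, W1 i p * star (W1 i q) = 0 := Finset.sum_eq_zero fun i _ => by
        by_cases h1 : p = i
        · have h2 : ¬ q = i := fun hh => hpq (h1.trans hh.symm)
          rw [hW1app, hW1app, if_neg h2]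
          simp
        · rw [hW1app, if_neg h1]
          simp
      rw [e1, zero_add]
      rcases lt_trichotomy p q with hlt | heq | hgt
      · -- p < q : only the pair (p, q) contributes
        have hzero : ∀ i j, ¬(i = p ∧ j = q) → W2 i j p * star (W2 i j q) = 0 := by
          intro i j hne
          by_cases hij : i < j
          · by_cases h1 : p = i
            · by_cases h2 : q = j
              · exact absurd ⟨h1.symm, h2.symm⟩ hne
              · have h3 : ¬ q = i := fun hh => hpq (h1.trans hh.symm)
                have hz : W2 i j q = 0 := by rw [hW2app, if_pos hij, if_neg h3, if_neg h2]
                rw [hz, star_zero, mul_zero]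
            · by_cases h2 : p = j
              · by_cases h3 : q = i
                · exfalso
                  have : q < p := by rw [h3, h2]; exact hij
                  exact lt_asymm hlt this
                · have h4 : ¬ q = j := fun hh => hpq (h2.trans hh.symm)
                  have hz : W2 i j q = 0 := by rw [hW2app, if_pos hij, if_neg h3, if_neg h4]
                  rw [hz, star_zero, mul_zero]
              · have hz : W2 i j p = 0 := by rw [hW2app, if_pos hij, if_neg h1, if_neg h2]
                rw [hz, zero_mul]
          · have hz : W2 i j p = 0 := by rw [hW2app, if_neg hij]
            rw [hz, zero_mul]
        have e4 : ∑ i, ∑ j, W2 i j p * star (W2 i j q) = W2 p q p * star (W2 p q q) := by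
          rw [Finset.sum_eq_single p
            (fun i _ hi => Finset.sum_eq_zero fun j _ => hzero i j fun hc => hi hc.1)
            (fun h => absurd (Finset.mem_univ p) h)]
          exact Finset.sum_eq_single q (fun j _ hj => hzero p j fun hc => hj hc.2)
            (fun h => absurd (Finset.mem_univ q) h)
        rw [e4]
        have hqp : ¬ q = p := fun hh => hpq hh.symm
        rw [hW2app, hW2app, if_pos hlt, if_pos hlt, if_pos rfl, if_neg hqp, if_pos rfl]
        by_cases hM0 : M p q = 0
        · rw [hM0]; simp
        · have hpos : 0 < aa p q :=
            div_pos (mul_pos (norm_pos_iff.mpr hM0) (hupos q)) (hupos p)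
          have hsne : ((Real.sqrt (aa p q) : ℝ) : ℂ) ≠ 0 :=
            Complex.ofReal_ne_zero.mpr (Real.sqrt_ne_zero'.mpr hpos)
          rw [Complex.star_def, map_div₀, Complex.conj_conj, Complex.conj_ofReal]
          rw [mul_comm, div_mul_cancel₀ _ hsne]
      · exact absurd heq hpq
      · -- q < p : only the pair (q, p) contributes
        have hzero : ∀ i j, ¬(i = q ∧ j = p) → W2 i j p * star (W2 i j q) = 0 := by
          intro i j hne
          by_cases hij : i < j
          · by_cases h1 : q = i
            · by_cases h2 : p = j
              · exact absurd ⟨h1.symm, h2.symm⟩ hne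
              · have h3 : ¬ p = i := fun hh => hpq (hh.trans h1.symm)
                have hz : W2 i j p = 0 := by rw [hW2app, if_pos hij, if_neg h3, if_neg h2]
                rw [hz, zero_mul]
            · by_cases h2 : q = j
              · by_cases h3 : p = i
                · exfalso
                  have : p < q := by rw [h3, h2]; exact hij
                  exact lt_asymm hgt this
                · have h4 : ¬ p = j := fun hh => hpq (hh.trans h2.symm)
                  have hz : W2 i j p = 0 := by rw [hW2app, if_pos hij, if_neg h3, if_neg h4]
                  rw [hz, zero_mul]
              · have hz : W2 i j q = 0 := by rw [hW2app, if_pos hij, if_neg h1, if_neg h2]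
                rw [hz, star_zero, mul_zero]
          · have hz : W2 i j p = 0 := by rw [hW2app, if_neg hij]
            rw [hz, zero_mul]
        have e4 : ∑ i, ∑ j, W2 i j p * star (W2 i j q) = W2 q p p * star (W2 q p q) := by
          rw [Finset.sum_eq_single q
            (fun i _ hi => Finset.sum_eq_zero fun j _ => hzero i j fun hc => hi hc.1)
            (fun h => absurd (Finset.mem_univ q) h)]
          exact Finset.sum_eq_single p (fun j _ hj => hzero q j fun hc => hj hc.2)
            (fun h => absurd (Finset.mem_univ p) h)
        rw [e4]
        have hpq' : ¬ p = q := hpq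
        rw [hW2app, hW2app, if_pos hgt, if_pos hgt, if_neg hpq', if_pos rfl, if_pos rfl]
        by_cases hM0 : M q p = 0
        · have hz : M p q = 0 := by rw [← hM.apply p q, hM0, star_zero]
          rw [hz, hM0]
          simp
        · have hpos : 0 < aa q p :=
            div_pos (mul_pos (norm_pos_iff.mpr hM0) (hupos p)) (hupos q)
          have hsne : ((Real.sqrt (aa q p) : ℝ) : ℂ) ≠ 0 :=
            Complex.ofReal_ne_zero.mpr (Real.sqrt_ne_zero'.mpr hpos)
          rw [Complex.star_def, Complex.conj_ofReal, div_mul_cancel₀ _ hsne]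
          exact (hM.apply p q).symm
  -- assemble everything
  obtain ⟨Wb, hWb⟩ : ∃ Wb : (Fin n ⊕ Fin n × Fin n) → Fin n → ℂ,
      Wb = Sum.elim W1 (fun q => W2 q.1 q.2) := ⟨_, rfl⟩
  set E : Fin (n + n*n) ≃ (Fin n ⊕ Fin n × Fin n) :=
    finSumFinEquiv.symm.trans (Equiv.sumCongr (Equiv.refl (Fin n)) finProdFinEquiv.symm)
    with hEdef
  have hsum : ∑ t : Fin (n + n*n), vecMulVec (Wb (E t)) (star (Wb (E t))) = M := by
    refine Eq.trans (Equiv.sum_comp E (fun σ => vecMulVec (Wb σ) (star (Wb σ)))) ?_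
    rw [hWb, Fintype.sum_sum_type]
    simp only [Sum.elim_inl, Sum.elim_inr]
    rw [show (∑ q : Fin n × Fin n, vecMulVec (W2 q.1 q.2) (star (W2 q.1 q.2)))
        = ∑ i, ∑ j, vecMulVec (W2 i j) (star (W2 i j)) from
      Fintype.sum_prod_type fun q : Fin n × Fin n =>
        vecMulVec (W2 q.1 q.2) (star (W2 q.1 q.2))]
    exact hMain.symm
  have hsupp : ∀ t : Fin (n + n*n), suppCard (Wb (E t)) ≤ 2 := by
    intro t
    rw [hWb]
    rcases E t with i | ⟨i, j⟩
    · rw [Sum.elim_inl]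
      have hzero : ∀ p, p ∉ ({i} : Finset (Fin n)) → W1 i p = 0 := by
        intro p hp
        rw [Finset.mem_singleton] at hp
        rw [hW1app, if_neg hp]
      calc suppCard (W1 i) ≤ ({i} : Finset (Fin n)).card :=
            suppCard_le_of_subset _ _ hzero
        _ ≤ 2 := by simp
    · rw [Sum.elim_inr]
      have hzero : ∀ p, p ∉ ({i, j} : Finset (Fin n)) → W2 i j p = 0 := by
        intro p hp
        simp only [Finset.mem_insert, Finset.mem_singleton, not_or] at hp
        rw [hW2app]
        by_cases hij : i < j
        · rw [if_pos hij, if_neg hp.1, if_neg hp.2]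
        · rw [if_neg hij]
      calc suppCard (W2 i j) ≤ ({i, j} : Finset (Fin n)).card :=
            suppCard_le_of_subset _ _ hzero
        _ ≤ 2 := by
            calc ({i, j} : Finset (Fin n)).card ≤ ({j} : Finset (Fin n)).card + 1 :=
                Finset.card_insert_le _ _
              _ ≤ 2 := by simp
  have hpsdM : M.PosSemidef := by
    rw [hMain]
    refine Matrix.PosSemidef.add ?_ ?_
    · exact Finset.sum_induction _ _ (fun a b ha hb => ha.add hb) Matrix.PosSemidef.zero
        (fun i _ => posSemidef_vecMulVec_star (W1 i))
    · exact Finset.sum_induction _ _ (fun a b ha hb => ha.add hb) Matrix.PosSemidef.zero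
        (fun i _ => Finset.sum_induction _ _ (fun a b ha hb => ha.add hb)
          Matrix.PosSemidef.zero (fun j _ => posSemidef_vecMulVec_star (W2 i j)))
  exact ⟨hpsdM,
    ⟨n + n*n, fun t => Wb (E t), hsupp, hsum.symm⟩,
    fun k hk2 _ => ⟨n + n*n, fun t => Wb (E t),
      fun t => le_trans (hsupp t) hk2, hsum.symm⟩⟩
end
end
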